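/- arXiv:1502.02748 — 3 statements merged into one kernel-verified Lean document; each statement's English description precedes it below -/
import Mathlib

section
/- Let L be a non-crossing partition of [n]. For any two distinct blocks B and B' of L, exactly one of the following four relations holds: B < B', B' < B, B <_L B', or B' <_L B. -/
open scoped TensorProduct

/-- The data of a collection of blocks (finite sets of natural numbers). -/
abbrev PartData : Type := Finset (Finset ℕ)

/-- The non-crossing condition on a collection of blocks: there are no
`p₁ < q₁ < p₂ < q₂` with `p₁, p₂` in one block and `q₁, q₂` in a different block. -/
def NoCrossing (P : PartData) : Prop :=
  ∀ B ∈ P, ∀ B' ∈ P, B ≠ B' →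
    ∀ p₁ ∈ B, ∀ p₂ ∈ B, ∀ q₁ ∈ B', ∀ q₂ ∈ B',
      ¬ (p₁ < q₁ ∧ q₁ < p₂ ∧ p₂ < q₂)

instance (P : PartData) : Decidable (NoCrossing P) := by
  unfold NoCrossing; exact inferInstance

/-- `NestedIn B B'` is the relation `B <_L B'`: every element of `B` lies strictly
between `min B'` and `max B'`. -/
def NestedIn (B B' : Finset ℕ) : Prop :=
  ∀ m ∈ B, (∃ a ∈ B', a < m) ∧ (∃ b ∈ B', m < b)

instance (B B' : Finset ℕ) : Decidable (NestedIn B B') := by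
  unfold NestedIn; exact inferInstance

/-- Admissibility of a decomposition of the blocks into `Q` and `U`:
no block of `Q` is `<_L` any block of `U`. -/
def Adm (Q U : PartData) : Prop := ∀ q ∈ Q, ∀ u ∈ U, ¬ NestedIn q u

instance (Q U : PartData) : Decidable (Adm Q U) := by
  unfold Adm; exact inferInstance

/-- `P` is a non-crossing set partition of `{0, 1, …, n-1}`. -/
def IsNCP (n : ℕ) (P : PartData) : Prop :=
  ∅ ∉ P ∧ (∀ B ∈ P, ∀ B' ∈ P, B ≠ B' → Disjoint B B') ∧
    P.sup id = Finset.range n ∧ NoCrossing P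

instance (n : ℕ) (P : PartData) : Decidable (IsNCP n P) := by
  unfold IsNCP; exact inferInstance

/-- The rank of `x` in `S` (the standardization map: the unique increasing
bijection from `S` onto `{0, …, |S|-1}`). -/
def rk (S : Finset ℕ) (x : ℕ) : ℕ := (S.filter (· < x)).card

/-- Standardization of a collection of blocks, via the rank map of its ground set. -/
def stdParts (P : PartData) : PartData := P.image fun B => B.image (rk (P.sup id))

/-- The connected component of `x` in `T` relative to the separating set `S`. -/
def compOf (S T : Finset ℕ) (x : ℕ) : Finset ℕ :=
  T.filter fun y => ∀ s ∈ S, ¬ (min x y < s ∧ s < max x y)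

/-- The ordered list of connected components of `T` relative to the separating set `S`. -/
def comps (S T : Finset ℕ) : List (Finset ℕ) :=
  ((T.sort (· ≤ ·)).map (compOf S T)).dedup

/-- The finite set of all non-crossing partitions of `{0, …, n-1}`. -/
def NCset (n : ℕ) : Finset PartData :=
  ((Finset.range n).powerset.powerset).filter (IsNCP n)

/-- `BlocksLT B B'` is the relation `B < B'`: every element of `B` is smaller than
every element of `B'`. -/
def BlocksLT (B B' : Finset ℕ) : Prop := ∀ a ∈ B, ∀ b ∈ B', a < b


lemma nested_notLT {B B' : Finset ℕ} (hB' : B'.Nonempty) (h : NestedIn B' B) :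
    ¬ BlocksLT B B' ∧ ¬ BlocksLT B' B := by
  obtain ⟨m, hm⟩ := hB'
  obtain ⟨⟨a, ha, ham⟩, ⟨b, hb, hmb⟩⟩ := h m hm
  constructor
  · intro hlt; exact absurd (hlt b hb m hm) (not_lt.mpr hmb.le)
  · intro hlt; exact absurd (hlt m hm a ha) (not_lt.mpr ham.le)

lemma nested_exclusive {B B' : Finset ℕ} (hB : B.Nonempty)
    (h1 : NestedIn B B') (h2 : NestedIn B' B) : False := by
  obtain ⟨b, hb, hub⟩ := (h1 (B.max' hB) (B.max'_mem hB)).2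
  obtain ⟨b', hb', hub'⟩ := (h2 b hb).2
  exact absurd (Finset.le_max' B b' hb') (not_le.mpr (hub.trans hub'))

lemma lt_notNested {B B' : Finset ℕ} (hB : B.Nonempty) (hB' : B'.Nonempty)
    (h : BlocksLT B B') : ¬ NestedIn B B' ∧ ¬ NestedIn B' B := by
  constructor
  · intro hn
    obtain ⟨m, hm⟩ := hB
    obtain ⟨a, ha, ham⟩ := (hn m hm).1
    exact absurd (h m hm a ha) (not_lt.mpr ham.le)
  · intro hn
    obtain ⟨m, hm⟩ := hB'
    obtain ⟨b, hb, hmb⟩ := (hn m hm).2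
    exact absurd (h b hb m hm) (not_lt.mpr hmb.le)

lemma key_dichotomy {B B' : Finset ℕ} (hB : B.Nonempty) (hB' : B'.Nonempty)
    (hdisj : Disjoint B B')
    (hnc : ∀ p₁ ∈ B, ∀ p₂ ∈ B, ∀ q₁ ∈ B', ∀ q₂ ∈ B', ¬ (p₁ < q₁ ∧ q₁ < p₂ ∧ p₂ < q₂))
    (hmin : B.min' hB < B'.min' hB') :
    BlocksLT B B' ∨ NestedIn B' B := by
  by_cases h : B.max' hB < B'.min' hB'
  · left; intro a ha b hb
    exact lt_of_le_of_lt (Finset.le_max' B a ha) (lt_of_lt_of_le h (Finset.min'_le B' b hb))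
  · right
    push_neg at h
    have hne : B'.min' hB' ≠ B.max' hB := by
      intro e
      exact Finset.disjoint_right.mp hdisj (B'.min'_mem hB') (e ▸ B.max'_mem hB)
    have h2 : B'.min' hB' < B.max' hB := lt_of_le_of_ne h hne
    intro m hm
    refine ⟨⟨B.min' hB, B.min'_mem hB, lt_of_lt_of_le hmin (Finset.min'_le B' m hm)⟩, ?_⟩
    refine ⟨B.max' hB, B.max'_mem hB, ?_⟩
    by_contra hle
    push_neg at hle
    have hneq : B.max' hB ≠ m := fun e =>
      Finset.disjoint_left.mp hdisj (e ▸ B.max'_mem hB) hm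
    have hlt : B.max' hB < m := lt_of_le_of_ne hle hneq
    exact hnc (B.min' hB) (B.min'_mem hB) (B.max' hB) (B.max'_mem hB)
      (B'.min' hB') (B'.min'_mem hB') m hm ⟨hmin, h2, hlt⟩

/-- For two distinct blocks `B, B'` of a non-crossing partition of
`[n] = {0,…,n-1}`, exactly one of the four relations `B < B'`, `B' < B`,
`B <_L B'`, `B' <_L B` holds. -/
theorem blocks_exactly_one_relation (n : ℕ)
    (L : Finpartition (Finset.range n)) (hL : NoCrossing L.parts)
    {B B' : Finset ℕ} (hB : B ∈ L.parts) (hB' : B' ∈ L.parts) (hne : B ≠ B') :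
    (BlocksLT B B' ∧ ¬ BlocksLT B' B ∧ ¬ NestedIn B B' ∧ ¬ NestedIn B' B) ∨
    (BlocksLT B' B ∧ ¬ BlocksLT B B' ∧ ¬ NestedIn B B' ∧ ¬ NestedIn B' B) ∨
    (NestedIn B B' ∧ ¬ BlocksLT B B' ∧ ¬ BlocksLT B' B ∧ ¬ NestedIn B' B) ∨
    (NestedIn B' B ∧ ¬ BlocksLT B B' ∧ ¬ BlocksLT B' B ∧ ¬ NestedIn B B') := by
  have hBne : B.Nonempty := L.nonempty_of_mem_parts hB
  have hB'ne : B'.Nonempty := L.nonempty_of_mem_parts hB'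
  have hdisj : Disjoint B B' := L.disjoint hB hB' hne
  have hnc := hL B hB B' hB' hne
  have hnc' := hL B' hB' B hB hne.symm
  have hminne : B.min' hBne ≠ B'.min' hB'ne := fun e =>
    Finset.disjoint_left.mp hdisj (B.min'_mem hBne) (e ▸ B'.min'_mem hB'ne)
  rcases lt_or_gt_of_ne hminne with hmin | hmin
  · rcases key_dichotomy hBne hB'ne hdisj hnc hmin with h | h
    · obtain ⟨h1, h2⟩ := lt_notNested hBne hB'ne h
      exact Or.inl ⟨h, fun h' => absurd (h' (B'.min' hB'ne) (B'.min'_mem hB'ne)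
        (B.min' hBne) (B.min'_mem hBne))
        (not_lt.mpr (h (B.min' hBne) (B.min'_mem hBne) (B'.min' hB'ne)
          (B'.min'_mem hB'ne)).le), h1, h2⟩
    · obtain ⟨h1, h2⟩ := nested_notLT hB'ne h
      exact Or.inr (Or.inr (Or.inr ⟨h, h1, h2,
        fun h' => nested_exclusive hBne h' h⟩))
  · rcases key_dichotomy hB'ne hBne hdisj.symm hnc' hmin with h | h
    · obtain ⟨h1, h2⟩ := lt_notNested hB'ne hBne h
      exact Or.inr (Or.inl ⟨h, fun h' => absurd (h' (B.min' hBne) (B.min'_mem hBne)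
        (B'.min' hB'ne) (B'.min'_mem hB'ne))
        (not_lt.mpr (h (B'.min' hB'ne) (B'.min'_mem hB'ne) (B.min' hBne)
          (B.min'_mem hBne)).le), h2, h1⟩)
    · obtain ⟨h1, h2⟩ := nested_notLT hBne h
      exact Or.inr (Or.inr (Or.inl ⟨h, h2, h1,
        fun h' => nested_exclusive hB'ne h' h⟩))
end

section
/- Let L be a non-crossing partition of [n], let L = Q ⊔_adm U be an admissible decomposition of its set of blocks, let S be the union of the blocks of Q, and let J₁,…,J_k be the connected components of [n]−S. Then every block of U is contained in exactly one component J_i; consequently, for each i the blocks of U contained in J_i form a non-crossing partition J_i^{L,Q} of J_i, and Q is a non-crossing partition of S. -/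
open scoped TensorProduct

/-- Let `L` be a non-crossing partition of `[n] = {0,…,n-1}`,
`L = Q ⊔_adm U` an admissible decomposition of its set of blocks, `S` the union of
the blocks of `Q`, and let the `Jᵢ` be the connected components of `[n] − S`.
Then every block of `U` is contained in exactly one component (no element of `S`
separates two elements of a block of `U`, and the components of the elements of a
block of `U` coincide); for each component `J`, the blocks of `U` contained in `J`
form a non-crossing partition of `J`; and `Q` is a non-crossing partition of `S`. -/
theorem blocks_of_admissible_decomposition (n : ℕ)
    (L : Finpartition (Finset.range n)) (hL : NoCrossing L.parts)
    (Q U : PartData) (hQU : Disjoint Q U) (hparts : L.parts = Q ∪ U)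
    (hadm : Adm Q U) :
    (∀ u ∈ U, ∀ x ∈ u, ∀ y ∈ u, ∀ s ∈ Q.sup id, ¬ (min x y < s ∧ s < max x y)) ∧
    (∀ u ∈ U, ∀ x ∈ u, u ⊆ compOf (Q.sup id) (Finset.range n \ Q.sup id) x) ∧
    (∀ u ∈ U, ∀ x ∈ u, ∀ y ∈ u,
      compOf (Q.sup id) (Finset.range n \ Q.sup id) x
        = compOf (Q.sup id) (Finset.range n \ Q.sup id) y) ∧
    (∀ x ∈ Finset.range n \ Q.sup id,
      ∃ P : Finpartition (compOf (Q.sup id) (Finset.range n \ Q.sup id) x),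
        P.parts = U.filter (· ⊆ compOf (Q.sup id) (Finset.range n \ Q.sup id) x) ∧
        NoCrossing P.parts) ∧
    (∃ P : Finpartition (Q.sup id), P.parts = Q ∧ NoCrossing Q) := by
  classical
  set S := Q.sup id with hS
  set T := Finset.range n \ S with hT
  have hmem : ∀ B ∈ Q ∪ U, B ∈ L.parts := fun B hB => hparts ▸ hB
  have hdisjB : ∀ B ∈ L.parts, ∀ B' ∈ L.parts, B ≠ B' → Disjoint B B' := by
    intro B hB B' hB' hne
    exact L.disjoint hB hB' hne
  have hne : ∀ q ∈ Q, ∀ u ∈ U, q ≠ u := by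
    intro q hq u hu h
    exact (Finset.disjoint_left.mp hQU hq) (h ▸ hu)
  -- claim 1
  have key1 : ∀ u ∈ U, ∀ x ∈ u, ∀ y ∈ u, ∀ s ∈ S, ¬ (min x y < s ∧ s < max x y) := by
    rintro u hu x hx y hy s hs ⟨h1, h2⟩
    obtain ⟨q, hq, hsq⟩ := Finset.mem_sup.mp hs
    have hqL := hmem q (Finset.mem_union_left _ hq)
    have huL := hmem u (Finset.mem_union_right _ hu)
    have hqu : q ≠ u := hne q hq u hu
    have hqud : Disjoint q u := hdisjB q hqL u huL hqu
    have hnn := hadm q hq u hu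
    rw [NestedIn] at hnn
    push_neg at hnn
    obtain ⟨m, hm, hnotboth⟩ := hnn
    have hmnu : m ∉ u := Finset.disjoint_left.mp hqud hm
    have hcase : (∀ a ∈ u, m ≤ a) ∨ (∀ b ∈ u, b ≤ m) := by
      by_contra hc
      push_neg at hc
      obtain ⟨⟨a, ha, ham⟩, b, hb, hbm⟩ := hc
      have := hnotboth ⟨a, ha, ham⟩ b hb
      omega
    obtain ⟨x', hx', y', hy', hxs, hsy⟩ :
        ∃ x' ∈ u, ∃ y' ∈ u, x' < s ∧ s < y' := by
      rcases le_total x y with h | h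
      · exact ⟨x, hx, y, hy, by omega, by omega⟩
      · exact ⟨y, hy, x, hx, by omega, by omega⟩
    rcases hcase with hlow | hhigh
    · have hmx : m < x' := lt_of_le_of_ne (hlow x' hx') (fun h => hmnu (h ▸ hx'))
      exact hL q hqL u huL hqu m hm s hsq x' hx' y' hy' ⟨hmx, hxs, hsy⟩
    · have hym : y' < m := lt_of_le_of_ne (hhigh y' hy') (fun h => hmnu (h ▸ hy'))
      exact hL u huL q hqL hqu.symm x' hx' y' hy' s hsq m hm ⟨hxs, hsy, hym⟩
  have mem_comp : ∀ x z : ℕ, z ∈ compOf S T x ↔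
      z ∈ T ∧ ∀ s ∈ S, ¬ (min x z < s ∧ s < max x z) := fun x z => Finset.mem_filter
  have Rsymm : ∀ x y : ℕ, (∀ s ∈ S, ¬ (min x y < s ∧ s < max x y)) →
      (∀ s ∈ S, ¬ (min y x < s ∧ s < max y x)) := by
    intro x y h s hs hc
    have := h s hs
    omega
  have Rtrans : ∀ x y z : ℕ, y ∈ T → (∀ s ∈ S, ¬ (min x y < s ∧ s < max x y)) →
      (∀ s ∈ S, ¬ (min y z < s ∧ s < max y z)) →
      (∀ s ∈ S, ¬ (min x z < s ∧ s < max x z)) := by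
    intro x y z hyT h1 h2 s hs hc
    have := h1 s hs
    have := h2 s hs
    have hys : y ≠ s := fun h => (Finset.mem_sdiff.mp hyT).2 (h ▸ hs)
    omega
  have comp_eq : ∀ x y : ℕ, x ∈ T → y ∈ T → (∀ s ∈ S, ¬ (min x y < s ∧ s < max x y)) →
      compOf S T x = compOf S T y := by
    intro x y hxT hyT h
    ext z
    rw [mem_comp, mem_comp]
    constructor
    · rintro ⟨hz, hR⟩
      exact ⟨hz, Rtrans y x z hxT (Rsymm x y h) hR⟩
    · rintro ⟨hz, hR⟩
      exact ⟨hz, Rtrans x y z hyT h hR⟩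
  have hUT : ∀ u ∈ U, u ⊆ T := by
    intro u hu y hy
    have huL := hmem u (Finset.mem_union_right _ hu)
    have hyr : y ∈ Finset.range n := by
      have : u ≤ L.parts.sup id := Finset.le_sup (f := id) huL
      rw [L.sup_parts] at this
      exact this hy
    refine Finset.mem_sdiff.mpr ⟨hyr, fun hyS => ?_⟩
    obtain ⟨q, hq, hyq⟩ := Finset.mem_sup.mp hyS
    have hqL := hmem q (Finset.mem_union_left _ hq)
    exact Finset.disjoint_left.mp (hdisjB q hqL u huL (hne q hq u hu)) hyq hy
  have key2 : ∀ u ∈ U, ∀ x ∈ u, u ⊆ compOf S T x := by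
    intro u hu x hx y hy
    exact (mem_comp x y).mpr ⟨hUT u hu hy, key1 u hu x hx y hy⟩
  have key3 : ∀ u ∈ U, ∀ x ∈ u, ∀ y ∈ u, compOf S T x = compOf S T y := by
    intro u hu x hx y hy
    exact comp_eq x y (hUT u hu hx) (hUT u hu hy) (key1 u hu x hx y hy)
  have hNCmono : ∀ P : PartData, (∀ B ∈ P, B ∈ L.parts) → NoCrossing P := by
    intro P hP B hB B' hB' h
    exact hL B (hP B hB) B' (hP B' hB') h
  refine ⟨key1, key2, key3, ?_, ?_⟩
  · intro x hx
    set J := compOf S T x with hJ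
    have hfmem : ∀ u ∈ U.filter (· ⊆ J), u ∈ L.parts := by
      intro u hu
      exact hmem u (Finset.mem_union_right _ (Finset.mem_filter.mp hu).1)
    have hsup : (U.filter (· ⊆ J)).sup id = J := by
      apply le_antisymm
      · exact Finset.sup_le fun u hu => (Finset.mem_filter.mp hu).2
      · intro z hz
        obtain ⟨hzT, hzR⟩ := (mem_comp x z).mp hz
        obtain ⟨hzr, hzS⟩ := Finset.mem_sdiff.mp hzT
        have : z ∈ L.parts.sup id := by rw [L.sup_parts]; exact hzr
        obtain ⟨B, hB, hzB⟩ := Finset.mem_sup.mp this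
        have hBU : B ∈ U := by
          rcases Finset.mem_union.mp (hparts ▸ hB) with h | h
          · exact absurd (Finset.mem_sup.mpr ⟨B, h, hzB⟩) hzS
          · exact h
        have hBsub : B ⊆ J := by
          have h1 : B ⊆ compOf S T z := key2 B hBU z hzB
          rwa [comp_eq z x hzT hx (Rsymm x z hzR)] at h1
        exact Finset.mem_sup.mpr ⟨B, Finset.mem_filter.mpr ⟨hBU, hBsub⟩, hzB⟩
    refine ⟨⟨U.filter (· ⊆ J), ?_, hsup, ?_⟩, rfl, ?_⟩
    · apply Finset.supIndep_iff_pairwiseDisjoint.mpr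
      intro B hB B' hB' hne'
      exact hdisjB B (hfmem B hB) B' (hfmem B' hB') hne'
    · intro h
      exact L.bot_notMem (hfmem ⊥ h)
    · exact hNCmono _ hfmem
  · refine ⟨⟨Q, ?_, rfl, ?_⟩, rfl, ?_⟩
    · apply Finset.supIndep_iff_pairwiseDisjoint.mpr
      intro B hB B' hB' hne'
      exact hdisjB B (hmem B (Finset.mem_union_left _ hB)) B'
        (hmem B' (Finset.mem_union_left _ hB')) hne'
    · intro h
      exact L.bot_notMem (hmem ⊥ (Finset.mem_union_left _ h))
    · exact hNCmono Q fun B hB => hmem B (Finset.mem_union_left _ hB)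
end

section
/- The splitting map Sp : T̄(T(A)) → T̄(NC(A)) is a morphism of unshuffle bialgebras: it is multiplicative and unital, and it intertwines the coproducts and half-coproducts: Δ ∘ Sp = (Sp ⊗ Sp) ∘ Δ, Δ_≺⁺ ∘ Sp = (Sp ⊗ Sp) ∘ Δ_≺⁺, and Δ_≻⁺ ∘ Sp = (Sp ⊗ Sp) ∘ Δ_≻⁺, where on the left the structure maps are those of T̄(NC(A)) and on the right those of T̄(T(A)). -/
open scoped TensorProduct

-- ===== auxiliary combinatorial lemmas =====

/-- the j-th element of S -/
def elt (S : Finset ℕ) (j : ℕ) : ℕ := (S.sort (· ≤ ·)).getD j 0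

lemma elt_strictmono {S : Finset ℕ} {i j : ℕ} (hj : j < S.card) (hij : i < j) :
    elt S i < elt S j := by
  have hl : (S.sort (· ≤ ·)).length = S.card := Finset.length_sort _
  have hi' : i < (S.sort (·≤·)).length := by omega
  have hj' : j < (S.sort (·≤·)).length := by omega
  have := ((Finset.sortedLT_sort S).getElem_lt_getElem_iff (hi := hi') (hj := hj')).mpr hij
  rw [elt, elt, List.getD_eq_getElem _ _ hi', List.getD_eq_getElem _ _ hj']
  simpa using this

lemma elt_mem {S : Finset ℕ} {j : ℕ} (hj : j < S.card) : elt S j ∈ S := by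
  have hj' : j < (S.sort (·≤·)).length := by rw [Finset.length_sort]; exact hj
  rw [elt, List.getD_eq_getElem _ _ hj']
  exact (Finset.mem_sort _).mp (List.getElem_mem _)

lemma elt_surj {S : Finset ℕ} {x : ℕ} (hx : x ∈ S) : ∃ j < S.card, elt S j = x := by
  have : x ∈ S.sort (·≤·) := (Finset.mem_sort _).mpr hx
  obtain ⟨⟨n, hn⟩, hget⟩ := List.mem_iff_get.mp this
  refine ⟨n, by rwa [Finset.length_sort] at hn, ?_⟩
  rw [elt, List.getD_eq_getElem _ _ hn]; exact hget

lemma filter_lt_elt (S : Finset ℕ) {j : ℕ} (hj : j < S.card) :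
    S.filter (· < elt S j) = (Finset.range j).image (elt S) := by
  ext x
  simp only [Finset.mem_filter, Finset.mem_image, Finset.mem_range]
  constructor
  · rintro ⟨hxS, hlt⟩
    obtain ⟨i, hi, rfl⟩ := elt_surj hxS
    refine ⟨i, ?_, rfl⟩
    by_contra h
    rcases Nat.lt_or_ge i j with h'|h'
    · exact h h'
    · rcases Nat.eq_or_lt_of_le h' with rfl|h''
      · exact absurd hlt (lt_irrefl _)
      · have := elt_strictmono hi h''; omega
  · rintro ⟨i, hij, rfl⟩
    exact ⟨elt_mem (by omega), elt_strictmono hj hij⟩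

lemma rk_elt (S : Finset ℕ) {j : ℕ} (hj : j < S.card) : rk S (elt S j) = j := by
  rw [rk, filter_lt_elt S hj, Finset.card_image_of_injOn, Finset.card_range]
  intro x hx y hy hxy
  simp only [Finset.coe_range, Set.mem_Iio] at hx hy
  by_contra h
  rcases Nat.lt_or_ge x y with h'|h'
  · have h2 : y < S.card := by omega
    have := elt_strictmono h2 h'; omega
  · rcases Nat.eq_or_lt_of_le h' with rfl|h''
    · exact h rfl
    · have h2 : x < S.card := by omega
      have := elt_strictmono h2 h''; omega

lemma rk_lt_card {S : Finset ℕ} {x : ℕ} (hx : x ∈ S) : rk S x < S.card := by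
  obtain ⟨j, hj, rfl⟩ := elt_surj hx
  rw [rk_elt S hj]; exact hj

lemma elt_rk {S : Finset ℕ} {x : ℕ} (hx : x ∈ S) : elt S (rk S x) = x := by
  obtain ⟨j, hj, rfl⟩ := elt_surj hx
  rw [rk_elt S hj]

lemma rk_lt_iff {S : Finset ℕ} {x y : ℕ} (hx : x ∈ S) (hy : y ∈ S) :
    rk S x < rk S y ↔ x < y := by
  obtain ⟨i, hi, rfl⟩ := elt_surj hx
  obtain ⟨j, hj, rfl⟩ := elt_surj hy
  rw [rk_elt S hi, rk_elt S hj]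
  constructor
  · exact fun h => elt_strictmono hj h
  · intro h; by_contra h'
    rcases Nat.lt_or_ge j i with h''|h''
    · have := elt_strictmono hi h''; omega
    · have hij : i = j := by omega
      subst hij; omega

lemma rk_injOn {S : Finset ℕ} {x y : ℕ} (hx : x ∈ S) (hy : y ∈ S) (h : rk S x = rk S y) : x = y := by
  by_contra hne
  rcases Nat.lt_or_ge x y with h'|h'
  · have := (rk_lt_iff hx hy).mpr h'; omega
  · rcases Nat.eq_or_lt_of_le h' with rfl|h'
    · exact hne rfl
    · have := (rk_lt_iff hy hx).mpr h'; omega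

lemma image_rk (S : Finset ℕ) : S.image (rk S) = Finset.range S.card := by
  ext j
  simp only [Finset.mem_image, Finset.mem_range]
  constructor
  · rintro ⟨x, hx, rfl⟩; exact rk_lt_card hx
  · intro hj; exact ⟨elt S j, elt_mem hj, rk_elt S hj⟩

lemma image_elt (S : Finset ℕ) : (Finset.range S.card).image (elt S) = S := by
  ext x
  simp only [Finset.mem_image, Finset.mem_range]
  constructor
  · rintro ⟨j, hj, rfl⟩; exact elt_mem hj
  · intro hx; obtain ⟨j, hj, rfl⟩ := elt_surj hx; exact ⟨j, hj, rfl⟩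

lemma elt_lt_iff {S : Finset ℕ} {i j : ℕ} (hi : i < S.card) (hj : j < S.card) :
    elt S i < elt S j ↔ i < j := by
  rw [← rk_lt_iff (elt_mem hi) (elt_mem hj), rk_elt S hi, rk_elt S hj]

/-- relative non-crossing partition of ground set `S` -/
def RNCP (S : Finset ℕ) (P : PartData) : Prop :=
  ∅ ∉ P ∧ (∀ B ∈ P, ∀ B' ∈ P, B ≠ B' → Disjoint B B') ∧
    P.sup id = S ∧ NoCrossing P

instance (S : Finset ℕ) (P : PartData) : Decidable (RNCP S P) := by
  unfold RNCP NoCrossing; exact inferInstance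

def RNC (S : Finset ℕ) : Finset PartData := S.powerset.powerset.filter (RNCP S)

lemma block_subset_sup {P : PartData} {B : Finset ℕ} (hB : B ∈ P) : B ⊆ P.sup id :=
  Finset.le_sup (f := id) hB

lemma mem_RNC {S : Finset ℕ} {P : PartData} : P ∈ RNC S ↔ RNCP S P := by
  constructor
  · exact fun h => (Finset.mem_filter.mp h).2
  · intro h
    refine Finset.mem_filter.mpr ⟨?_, h⟩
    simp only [Finset.mem_powerset]
    intro B hB
    simp only [Finset.mem_powerset]
    exact h.2.2.1 ▸ block_subset_sup hB

lemma sup_image_image (P : PartData) (f : ℕ → ℕ) :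
    (P.image fun B => B.image f).sup id = (P.sup id).image f := by
  ext z
  simp only [Finset.mem_sup, Finset.mem_image, id]
  constructor
  · rintro ⟨B', ⟨B, hB, rfl⟩, hz⟩
    obtain ⟨x, hx, rfl⟩ := Finset.mem_image.mp hz
    exact ⟨x, ⟨B, hB, hx⟩, rfl⟩
  · rintro ⟨x, ⟨B, hB, hx⟩, rfl⟩
    exact ⟨B.image f, ⟨B, hB, rfl⟩, Finset.mem_image_of_mem f hx⟩

/-- transfer of RNCP along a map that is strictly monotone on `S` -/
lemma RNCP_image {S : Finset ℕ} {P : PartData} (hP : RNCP S P) (f : ℕ → ℕ)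
    (hf : ∀ x ∈ S, ∀ y ∈ S, x < y ↔ f x < f y) :
    RNCP (S.image f) (P.image fun B => B.image f) := by
  obtain ⟨hne, hdisj, hsup, hnc⟩ := hP
  have hinj : ∀ x ∈ S, ∀ y ∈ S, f x = f y → x = y := by
    intro x hx y hy hxy
    by_contra h
    rcases Nat.lt_or_ge x y with h'|h'
    · have := (hf x hx y hy).mp h'; omega
    · rcases Nat.eq_or_lt_of_le h' with rfl|h'
      · exact h rfl
      · have := (hf y hy x hx).mp h'; omega
  have hBS : ∀ B ∈ P, B ⊆ S := fun B hB => hsup ▸ block_subset_sup hB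
  have himinj : ∀ B ∈ P, ∀ B' ∈ P, B.image f = B'.image f → B = B' := by
    intro B hB B' hB' h
    ext x
    constructor
    · intro hx
      have : f x ∈ B'.image f := h ▸ Finset.mem_image_of_mem f hx
      obtain ⟨y, hy, hxy⟩ := Finset.mem_image.mp this
      rwa [hinj y (hBS B' hB' hy) x (hBS B hB hx) hxy] at hy
    · intro hx
      have : f x ∈ B.image f := h ▸ Finset.mem_image_of_mem f hx
      obtain ⟨y, hy, hxy⟩ := Finset.mem_image.mp this
      rwa [hinj y (hBS B hB hy) x (hBS B' hB' hx) hxy] at hy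
  refine ⟨?_, ?_, ?_, ?_⟩
  · intro h
    obtain ⟨B, hB, hBe⟩ := Finset.mem_image.mp h
    rw [Finset.image_eq_empty] at hBe
    exact hne (hBe ▸ hB)
  · rintro _ h _ h' hne'
    obtain ⟨B, hB, rfl⟩ := Finset.mem_image.mp h
    obtain ⟨B', hB', rfl⟩ := Finset.mem_image.mp h'
    have hBB' : B ≠ B' := fun h => hne' (h ▸ rfl)
    rw [Finset.disjoint_left]
    intro z hz hz'
    obtain ⟨x, hx, rfl⟩ := Finset.mem_image.mp hz
    obtain ⟨y, hy, hxy⟩ := Finset.mem_image.mp hz'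
    have := hinj y (hBS B' hB' hy) x (hBS B hB hx) hxy
    subst this
    exact (Finset.disjoint_left.mp (hdisj B hB B' hB' hBB') hx) hy
  · rw [sup_image_image, hsup]
  · rintro _ h _ h' hne' p₁ hp₁ p₂ hp₂ q₁ hq₁ q₂ hq₂ ⟨h1, h2, h3⟩
    obtain ⟨B, hB, rfl⟩ := Finset.mem_image.mp h
    obtain ⟨B', hB', rfl⟩ := Finset.mem_image.mp h'
    obtain ⟨x₁, hx₁, rfl⟩ := Finset.mem_image.mp hp₁
    obtain ⟨x₂, hx₂, rfl⟩ := Finset.mem_image.mp hp₂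
    obtain ⟨y₁, hy₁, rfl⟩ := Finset.mem_image.mp hq₁
    obtain ⟨y₂, hy₂, rfl⟩ := Finset.mem_image.mp hq₂
    have hBB' : B ≠ B' := fun hh => hne' (hh ▸ rfl)
    have m1 := hBS B hB hx₁; have m2 := hBS B hB hx₂
    have m3 := hBS B' hB' hy₁; have m4 := hBS B' hB' hy₂
    exact hnc B hB B' hB' hBB' x₁ hx₁ x₂ hx₂ y₁ hy₁ y₂ hy₂
      ⟨(hf x₁ m1 y₁ m3).mpr h1, (hf y₁ m3 x₂ m2).mpr h2, (hf x₂ m2 y₂ m4).mpr h3⟩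

def pull (S : Finset ℕ) (L : PartData) : PartData := L.image fun B => B.image (elt S)

lemma rk_iff' (S : Finset ℕ) : ∀ x ∈ S, ∀ y ∈ S, x < y ↔ rk S x < rk S y :=
  fun x hx y hy => (rk_lt_iff hx hy).symm

lemma elt_iff' (S : Finset ℕ) : ∀ x ∈ Finset.range S.card, ∀ y ∈ Finset.range S.card,
    x < y ↔ elt S x < elt S y := by
  intro x hx y hy
  rw [Finset.mem_range] at hx hy
  exact (elt_lt_iff hx hy).symm

lemma stdParts_eq {S : Finset ℕ} {P : PartData} (hsup : P.sup id = S) :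
    stdParts P = P.image fun B => B.image (rk S) := by
  rw [stdParts, hsup]

lemma RNCP_stdParts {S : Finset ℕ} {P : PartData} (hP : RNCP S P) :
    RNCP (Finset.range S.card) (stdParts P) := by
  rw [stdParts_eq hP.2.2.1, ← image_rk S]
  exact RNCP_image hP (rk S) (rk_iff' S)

lemma RNCP_pull {S : Finset ℕ} {L : PartData} (hL : RNCP (Finset.range S.card) L) :
    RNCP S (pull S L) := by
  have := RNCP_image hL (elt S) (elt_iff' S)
  rwa [image_elt S] at this

lemma image_image_block {S B : Finset ℕ} (hB : B ⊆ S) :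
    (B.image (rk S)).image (elt S) = B := by
  rw [Finset.image_image]
  conv_rhs => rw [← Finset.image_id (s := B)]
  apply Finset.image_congr
  intro x hx
  exact elt_rk (hB hx)

lemma image_image_block' {S C : Finset ℕ} (hC : C ⊆ Finset.range S.card) :
    (C.image (elt S)).image (rk S) = C := by
  rw [Finset.image_image]
  conv_rhs => rw [← Finset.image_id (s := C)]
  apply Finset.image_congr
  intro x hx
  exact rk_elt S (Finset.mem_range.mp (hC hx))

lemma pull_std {S : Finset ℕ} {P : PartData} (hP : RNCP S P) : pull S (stdParts P) = P := by
  rw [stdParts_eq hP.2.2.1, pull, Finset.image_image]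
  have : ∀ B ∈ P, ((fun B => B.image (elt S)) ∘ fun B => B.image (rk S)) B = id B := by
    intro B hB
    exact image_image_block (hP.2.2.1 ▸ block_subset_sup hB)
  rw [Finset.image_congr this, Finset.image_id]

lemma std_pull {S : Finset ℕ} {L : PartData} (hL : RNCP (Finset.range S.card) L) :
    stdParts (pull S L) = L := by
  rw [stdParts_eq (RNCP_pull hL).2.2.1, pull, Finset.image_image]
  have : ∀ B ∈ L, ((fun B => B.image (rk S)) ∘ fun B => B.image (elt S)) B = id B := by
    intro B hB
    exact image_image_block' (hL.2.2.1 ▸ block_subset_sup hB)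
  rw [Finset.image_congr this, Finset.image_id]

lemma sum_RNC {M : Type*} [AddCommMonoid M] (S : Finset ℕ) (G : PartData → M) :
    ∑ L ∈ RNC S, G (stdParts L) = ∑ L' ∈ RNC (Finset.range S.card), G L' := by
  refine Finset.sum_nbij' stdParts (pull S) ?_ ?_ ?_ ?_ ?_
  · intro L hL; exact mem_RNC.mpr (RNCP_stdParts (mem_RNC.mp hL))
  · intro L hL; exact mem_RNC.mpr (RNCP_pull (mem_RNC.mp hL))
  · intro L hL; exact pull_std (mem_RNC.mp hL)
  · intro L hL; exact std_pull (mem_RNC.mp hL)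
  · intro L hL; rfl

lemma mem_compOf {S T : Finset ℕ} {x y : ℕ} :
    y ∈ compOf S T x ↔ y ∈ T ∧ ∀ s ∈ S, ¬ (min x y < s ∧ s < max x y) := Finset.mem_filter

lemma self_mem_compOf {S T : Finset ℕ} {x : ℕ} (hx : x ∈ T) : x ∈ compOf S T x :=
  mem_compOf.mpr ⟨hx, fun s _ h => by omega⟩

lemma compOf_symm {S T : Finset ℕ} {x y : ℕ} (hx : x ∈ T) (hy : y ∈ compOf S T x) :
    x ∈ compOf S T y := by
  rw [mem_compOf] at hy ⊢
  exact ⟨hx, fun s hs h => hy.2 s hs (by omega)⟩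

lemma compOf_trans {S T : Finset ℕ} {x y z : ℕ} (hxs : x ∉ S) (hy : y ∈ compOf S T x)
    (hz : z ∈ compOf S T x) : z ∈ compOf S T y := by
  rw [mem_compOf] at hy hz ⊢
  refine ⟨hz.1, fun s hs h => ?_⟩
  have hxs' : x ≠ s := fun h' => hxs (h' ▸ hs)
  by_cases hcase : min x y < s ∧ s < max x y
  · exact hy.2 s hs hcase
  · exact hz.2 s hs (by omega)

lemma compOf_eq {S T : Finset ℕ} (hST : Disjoint S T) {x y : ℕ} (hx : x ∈ T)
    (hy : y ∈ compOf S T x) : compOf S T y = compOf S T x := by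
  have hxs : x ∉ S := Finset.disjoint_right.mp hST hx
  have hys : y ∉ S := Finset.disjoint_right.mp hST (mem_compOf.mp hy).1
  ext z
  constructor
  · intro hz
    exact compOf_trans hys (compOf_symm hx hy) hz
  · intro hz
    exact compOf_trans hxs hy hz

lemma mem_comps {S T : Finset ℕ} {J : Finset ℕ} :
    J ∈ comps S T ↔ ∃ x ∈ T, J = compOf S T x := by
  rw [comps, List.mem_dedup, List.mem_map]
  constructor
  · rintro ⟨x, hx, rfl⟩
    exact ⟨x, (Finset.mem_sort _).mp hx, rfl⟩
  · rintro ⟨x, hx, rfl⟩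
    exact ⟨x, (Finset.mem_sort _).mpr hx, rfl⟩

lemma comps_subset {S T J : Finset ℕ} (hJ : J ∈ comps S T) : J ⊆ T := by
  obtain ⟨x, _, rfl⟩ := mem_comps.mp hJ
  exact Finset.filter_subset _ _

lemma comps_nonempty {S T J : Finset ℕ} (hJ : J ∈ comps S T) : J.Nonempty := by
  obtain ⟨x, hx, rfl⟩ := mem_comps.mp hJ
  exact ⟨x, self_mem_compOf hx⟩

/-- C7 -/
lemma comps_eq_compOf {S T : Finset ℕ} (hST : Disjoint S T) {J : Finset ℕ}
    (hJ : J ∈ comps S T) {y : ℕ} (hy : y ∈ J) : J = compOf S T y := by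
  obtain ⟨x, hx, rfl⟩ := mem_comps.mp hJ
  exact (compOf_eq hST hx hy).symm

/-- C4 -/
lemma comps_disjoint {S T : Finset ℕ} (hST : Disjoint S T) {J J' : Finset ℕ}
    (hJ : J ∈ comps S T) (hJ' : J' ∈ comps S T) (hne : J ≠ J') : Disjoint J J' := by
  rw [Finset.disjoint_left]
  intro z hz hz'
  exact hne ((comps_eq_compOf hST hJ hz).trans (comps_eq_compOf hST hJ' hz').symm)

/-- C3 -/
lemma mem_comps_cover {S T : Finset ℕ} {x : ℕ} (hx : x ∈ T) :
    compOf S T x ∈ comps S T ∧ x ∈ compOf S T x :=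
  ⟨mem_comps.mpr ⟨x, hx, rfl⟩, self_mem_compOf hx⟩

/-- C5 : no element of `S` lies strictly between two elements of a component -/
lemma comps_convex {S T J : Finset ℕ} (hST : Disjoint S T) (hJ : J ∈ comps S T) {y₁ y₂ s : ℕ}
    (h₁ : y₁ ∈ J) (h₂ : y₂ ∈ J) (hs : s ∈ S) : ¬ (y₁ < s ∧ s < y₂) := by
  intro h
  have := comps_eq_compOf hST hJ h₁ ▸ h₂
  rw [mem_compOf] at this
  exact this.2 s hs (by omega)

/-- C6 : distinct components are separated by an element of `S` -/
lemma comps_separated {S T : Finset ℕ} (hST : Disjoint S T) {J J' : Finset ℕ}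
    (hJ : J ∈ comps S T) (hJ' : J' ∈ comps S T) (hne : J ≠ J') :
    ∃ s ∈ S, ((∀ z ∈ J, z < s) ∧ (∀ z ∈ J', s < z)) ∨
      ((∀ z ∈ J', z < s) ∧ (∀ z ∈ J, s < z)) := by
  obtain ⟨a, ha⟩ := comps_nonempty hJ
  obtain ⟨b, hb⟩ := comps_nonempty hJ'
  have hJa : J = compOf S T a := comps_eq_compOf hST hJ ha
  have hJb : J' = compOf S T b := comps_eq_compOf hST hJ' hb
  have hbT : b ∈ T := comps_subset hJ' hb
  have hbn : b ∉ compOf S T a := by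
    intro h
    exact hne (hJa ▸ hJb ▸ (compOf_eq hST (comps_subset hJ ha) h).symm)
  rw [mem_compOf] at hbn
  push_neg at hbn
  obtain ⟨s, hs, hs2⟩ := hbn hbT
  refine ⟨s, hs, ?_⟩
  have hsT : ∀ z ∈ T, z ≠ s := by
    intro z hz h
    exact (Finset.disjoint_right.mp hST) hz (h ▸ hs)
  rcases Nat.lt_or_ge a b with hab|hab
  · left
    constructor
    · intro z hz
      have h5 := comps_convex hST hJ ha hz hs
      have := hsT z (comps_subset hJ hz)
      omega
    · intro z hz
      have h5 := comps_convex hST hJ' hz hb hs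
      have := hsT z (comps_subset hJ' hz)
      omega
  · right
    constructor
    · intro z hz
      have h5 := comps_convex hST hJ' hb hz hs
      have := hsT z (comps_subset hJ' hz)
      omega
    · intro z hz
      have h5 := comps_convex hST hJ hz ha hs
      have := hsT z (comps_subset hJ hz)
      omega

def WD (l : List (Finset ℕ)) : Finset PartData :=
  (l.foldr (· ∪ ·) ∅).powerset.powerset.filter fun V =>
    (∀ u ∈ V, ∃ J ∈ l, u ⊆ J) ∧ ∀ J ∈ l, RNCP J (V.filter (· ⊆ J))

lemma subset_foldr {l : List (Finset ℕ)} {J : Finset ℕ} (hJ : J ∈ l) :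
    J ⊆ l.foldr (· ∪ ·) ∅ := by
  induction l with
  | nil => simp at hJ
  | cons K t ih =>
    rcases List.mem_cons.mp hJ with rfl|hJ
    · exact Finset.subset_union_left
    · exact (ih hJ).trans Finset.subset_union_right

lemma mem_WD {l : List (Finset ℕ)} {V : PartData} :
    V ∈ WD l ↔ (∀ u ∈ V, ∃ J ∈ l, u ⊆ J) ∧ ∀ J ∈ l, RNCP J (V.filter (· ⊆ J)) := by
  rw [WD, Finset.mem_filter, and_iff_right_iff_imp]
  intro h
  rw [Finset.mem_powerset]
  intro u hu
  rw [Finset.mem_powerset]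
  obtain ⟨J, hJ, huJ⟩ := h.1 u hu
  exact huJ.trans (subset_foldr hJ)

lemma WD_block_nonempty {l : List (Finset ℕ)} {V : PartData} (hV : V ∈ WD l)
    {u : Finset ℕ} (hu : u ∈ V) : u.Nonempty := by
  rw [mem_WD] at hV
  obtain ⟨J, hJ, huJ⟩ := hV.1 u hu
  rcases Finset.eq_empty_or_nonempty u with rfl|h
  · have : (∅ : Finset ℕ) ∈ V.filter (· ⊆ J) := Finset.mem_filter.mpr ⟨hu, Finset.empty_subset J⟩
    exact absurd this (hV.2 J hJ).1
  · exact h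

lemma WD_nil : WD [] = {∅} := by
  ext V
  rw [mem_WD, Finset.mem_singleton]
  constructor
  · rintro ⟨h1, _⟩
    rw [Finset.eq_empty_iff_forall_notMem]
    intro u hu
    obtain ⟨J, hJ, _⟩ := h1 u hu
    simp at hJ
  · rintro rfl
    exact ⟨by simp, by simp [RNCP, NoCrossing]⟩

lemma RNCP_block_nonempty {S : Finset ℕ} {P : PartData} (hP : RNCP S P)
    {u : Finset ℕ} (hu : u ∈ P) : u.Nonempty := by
  rcases Finset.eq_empty_or_nonempty u with rfl|h
  · exact absurd hu hP.1
  · exact h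

lemma filter_union_left {V₁ V₂ : PartData} {J : Finset ℕ}
    (h1 : ∀ u ∈ V₁, u ⊆ J) (h2 : ∀ u ∈ V₂, u.Nonempty → ¬ u ⊆ J)
    (h3 : ∀ u ∈ V₂, u.Nonempty) :
    (V₁ ∪ V₂).filter (· ⊆ J) = V₁ := by
  ext u
  rw [Finset.mem_filter, Finset.mem_union]
  constructor
  · rintro ⟨h, hJ⟩
    rcases h with h|h
    · exact h
    · exact absurd hJ (h2 u h (h3 u h))
  · intro h
    exact ⟨Or.inl h, h1 u h⟩

lemma filter_union_right {V₁ V₂ : PartData} {J : Finset ℕ}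
    (h1 : ∀ u ∈ V₁, u.Nonempty → ¬ u ⊆ J) (h3 : ∀ u ∈ V₁, u.Nonempty) :
    (V₁ ∪ V₂).filter (· ⊆ J) = V₂.filter (· ⊆ J) := by
  ext u
  rw [Finset.mem_filter, Finset.mem_filter, Finset.mem_union]
  constructor
  · rintro ⟨h, hJ⟩
    rcases h with h|h
    · exact absurd hJ (h1 u h (h3 u h))
    · exact ⟨h, hJ⟩
  · rintro ⟨h, hJ⟩
    exact ⟨Or.inr h, hJ⟩

lemma subset_disjoint_not_subset {u J J' : Finset ℕ} (hd : Disjoint J J')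
    (hu : u.Nonempty) (h : u ⊆ J') : ¬ u ⊆ J := by
  intro h'
  obtain ⟨x, hx⟩ := hu
  exact Finset.disjoint_left.mp hd (h' hx) (h hx)

lemma filter_not_filter {V : PartData} {J J' : Finset ℕ} (hd : Disjoint J J')
    (hn : ∀ u ∈ V, u.Nonempty) :
    (V.filter (fun u => ¬ u ⊆ J)).filter (· ⊆ J') = V.filter (· ⊆ J') := by
  rw [Finset.filter_filter]
  apply Finset.filter_congr
  intro u hu
  simp only [and_iff_right_iff_imp]
  intro h
  exact subset_disjoint_not_subset hd (hn u hu) h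

lemma WD_prod {R : Type*} [Semiring R] (F : Finset ℕ → PartData → R) :
    ∀ l : List (Finset ℕ), l.Pairwise (fun J J' => Disjoint J J') →
    (∀ J ∈ l, J.Nonempty) →
    ∑ V ∈ WD l, (l.map (fun J => F J (V.filter (· ⊆ J)))).prod
      = (l.map (fun J => ∑ L ∈ RNC J, F J L)).prod := by
  intro l
  induction l with
  | nil => intro _ _; simp [WD_nil]
  | cons J t ih =>
    intro hpw hne
    have hdJ : ∀ J' ∈ t, Disjoint J J' := (List.pairwise_cons.mp hpw).1
    have hpwt : t.Pairwise (fun J J' => Disjoint J J') := (List.pairwise_cons.mp hpw).2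
    have hnet : ∀ J' ∈ t, J'.Nonempty := fun J' hJ' => hne J' (List.mem_cons_of_mem J hJ')
    simp only [List.map_cons, List.prod_cons]
    rw [← ih hpwt hnet, Finset.sum_mul_sum]
    rw [← Finset.sum_product' (RNC J) (WD t)
      (fun L V₂ => F J L * (t.map (fun J' => F J' (V₂.filter (· ⊆ J')))).prod)]
    refine Finset.sum_nbij' (fun V => (V.filter (· ⊆ J), V.filter (fun u => ¬ u ⊆ J)))
      (fun p => p.1 ∪ p.2) ?_ ?_ ?_ ?_ ?_
    · -- forward membership
      intro V hV
      have hV' := mem_WD.mp hV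
      rw [Finset.mem_product]
      constructor
      · exact mem_RNC.mpr (hV'.2 J List.mem_cons_self)
      · rw [mem_WD]
        constructor
        · intro u hu
          rw [Finset.mem_filter] at hu
          obtain ⟨J₀, hJ₀, huJ₀⟩ := hV'.1 u hu.1
          rcases List.mem_cons.mp hJ₀ with rfl|hJ₀
          · exact absurd huJ₀ hu.2
          · exact ⟨J₀, hJ₀, huJ₀⟩
        · intro J' hJ'
          rw [filter_not_filter (hdJ J' hJ') (fun u hu => WD_block_nonempty hV hu)]
          exact hV'.2 J' (List.mem_cons_of_mem J hJ')
    · -- backward membership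
      rintro ⟨L, V₂⟩ hp
      rw [Finset.mem_product] at hp
      obtain ⟨hL, hV₂⟩ := hp
      have hLr := mem_RNC.mp hL
      have hV₂' := mem_WD.mp hV₂
      have hLJ : ∀ u ∈ L, u ⊆ J := fun u hu => hLr.2.2.1 ▸ block_subset_sup hu
      have hV₂n : ∀ u ∈ V₂, u.Nonempty := fun u hu => WD_block_nonempty hV₂ hu
      have hV₂nJ : ∀ u ∈ V₂, u.Nonempty → ¬ u ⊆ J := by
        intro u hu hun hJc
        obtain ⟨J', hJ', huJ'⟩ := hV₂'.1 u hu
        obtain ⟨x, hx⟩ := hun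
        exact Finset.disjoint_left.mp (hdJ J' hJ') (hJc hx) (huJ' hx)
      rw [mem_WD]
      dsimp only
      constructor
      · intro u hu
        rcases Finset.mem_union.mp hu with hu|hu
        · exact ⟨J, List.mem_cons_self, hLJ u hu⟩
        · obtain ⟨J', hJ', huJ'⟩ := hV₂'.1 u hu
          exact ⟨J', List.mem_cons_of_mem J hJ', huJ'⟩
      · intro J₀ hJ₀
        rcases List.mem_cons.mp hJ₀ with rfl|hJ₀
        · rw [filter_union_left hLJ hV₂nJ hV₂n]
          exact hLr
        · rw [filter_union_right (fun u hu _ => subset_disjoint_not_subset ((hdJ J₀ hJ₀).symm)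
            (RNCP_block_nonempty hLr hu) (hLJ u hu)) (fun u hu => RNCP_block_nonempty hLr hu)]
          exact hV₂'.2 J₀ hJ₀
    · -- left inverse
      intro V _
      exact Finset.filter_union_filter_not_eq _ V
    · -- right inverse
      rintro ⟨L, V₂⟩ hp
      rw [Finset.mem_product] at hp
      obtain ⟨hL, hV₂⟩ := hp
      have hLr := mem_RNC.mp hL
      have hV₂' := mem_WD.mp hV₂
      have hLJ : ∀ u ∈ L, u ⊆ J := fun u hu => hLr.2.2.1 ▸ block_subset_sup hu
      have hV₂n : ∀ u ∈ V₂, u.Nonempty := fun u hu => WD_block_nonempty hV₂ hu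
      have hV₂nJ : ∀ u ∈ V₂, u.Nonempty → ¬ u ⊆ J := by
        intro u hu hun hJc
        obtain ⟨J', hJ', huJ'⟩ := hV₂'.1 u hu
        obtain ⟨x, hx⟩ := hun
        exact Finset.disjoint_left.mp (hdJ J' hJ') (hJc hx) (huJ' hx)
      have e1 : (L ∪ V₂).filter (· ⊆ J) = L := filter_union_left hLJ hV₂nJ hV₂n
      have e2 : (L ∪ V₂).filter (fun u => ¬ u ⊆ J) = V₂ := by
        ext u
        rw [Finset.mem_filter, Finset.mem_union]
        constructor
        · rintro ⟨h|h, hn⟩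
          · exact absurd (hLJ u h) hn
          · exact h
        · intro h
          exact ⟨Or.inr h, hV₂nJ u h (hV₂n u h)⟩
      show ((L ∪ V₂).filter (· ⊆ J), (L ∪ V₂).filter (fun u => ¬ u ⊆ J)) = (L, V₂)
      rw [e1, e2]
    · -- values
      intro V hV
      dsimp only
      congr 1
      apply congrArg List.prod
      apply List.map_congr_left
      intro J' hJ'
      rw [filter_not_filter (hdJ J' hJ') (fun u hu => WD_block_nonempty hV hu)]

lemma NoCrossing_subset {P P' : PartData} (h : P' ⊆ P) (hP : NoCrossing P) : NoCrossing P' :=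
  fun B hB B' hB' hne => hP B (h hB) B' (h hB') hne

lemma mem_NCset {n : ℕ} {P : PartData} : P ∈ NCset n ↔ IsNCP n P := by
  constructor
  · exact fun h => (Finset.mem_filter.mp h).2
  · intro h
    refine Finset.mem_filter.mpr ⟨?_, h⟩
    simp only [Finset.mem_powerset]
    intro B hB
    simp only [Finset.mem_powerset]
    exact h.2.2.1 ▸ block_subset_sup hB

lemma IsNCP_iff_RNCP {n : ℕ} {P : PartData} : IsNCP n P ↔ RNCP (Finset.range n) P := Iff.rfl

lemma NCset_eq_RNC (n : ℕ) : NCset n = RNC (Finset.range n) := by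
  ext P
  rw [mem_NCset, mem_RNC, IsNCP_iff_RNCP]

section Forward

variable {m : ℕ} {P Q : PartData}

/-- blocks of `U = P \ Q` do not straddle points of `S = ⋃ Q` -/
lemma U_connected (hP : RNCP (Finset.range m) P) (hQP : Q ⊆ P) (hAdm : Adm Q (P \ Q))
    {u : Finset ℕ} (hu : u ∈ P \ Q) {x y s : ℕ} (hx : x ∈ u) (hy : y ∈ u)
    (hs : s ∈ Q.sup id) : ¬ (x < s ∧ s < y) := by
  rintro ⟨hxs, hsy⟩
  obtain ⟨hne, hdisj, hsup, hnc⟩ := hP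
  obtain ⟨q, hq, hsq⟩ := Finset.mem_sup.mp hs
  have huP : u ∈ P := (Finset.mem_sdiff.mp hu).1
  have huQ : u ∉ Q := (Finset.mem_sdiff.mp hu).2
  have hqP : q ∈ P := hQP hq
  have hqu : q ≠ u := fun h => huQ (h ▸ hq)
  have hqxy : ∀ t ∈ q, x < t ∧ t < y := by
    intro t ht
    constructor
    · by_contra h
      push_neg at h
      rcases Nat.eq_or_lt_of_le h with rfl|h'
      · exact (Finset.disjoint_left.mp (hdisj q hqP u huP hqu) ht) hx
      · exact hnc q hqP u huP hqu t ht s hsq x hx y hy ⟨h', hxs, hsy⟩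
    · by_contra h
      push_neg at h
      rcases Nat.eq_or_lt_of_le h with rfl|h'
      · exact (Finset.disjoint_left.mp (hdisj q hqP u huP hqu) ht) hy
      · exact hnc u huP q hqP (Ne.symm hqu) x hx y hy s hsq t ht ⟨hxs, hsy, h'⟩
  apply hAdm q hq u hu
  intro t ht
  exact ⟨⟨x, hx, (hqxy t ht).1⟩, ⟨y, hy, (hqxy t ht).2⟩⟩

lemma U_subset_T (hP : RNCP (Finset.range m) P) (hQP : Q ⊆ P)
    {u : Finset ℕ} (hu : u ∈ P \ Q) : u ⊆ Finset.range m \ Q.sup id := by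
  intro x hx
  have huP : u ∈ P := (Finset.mem_sdiff.mp hu).1
  rw [Finset.mem_sdiff]
  refine ⟨hP.2.2.1 ▸ block_subset_sup huP hx, ?_⟩
  intro hxS
  obtain ⟨q, hq, hxq⟩ := Finset.mem_sup.mp hxS
  have hqu : q ≠ u := fun h => (Finset.mem_sdiff.mp hu).2 (h ▸ hq)
  exact (Finset.disjoint_left.mp (hP.2.1 q (hQP hq) u huP hqu) hxq) hx

lemma U_block_in_comp (hP : RNCP (Finset.range m) P) (hQP : Q ⊆ P) (hAdm : Adm Q (P \ Q))
    {u : Finset ℕ} (hu : u ∈ P \ Q) :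
    ∃ J ∈ comps (Q.sup id) (Finset.range m \ Q.sup id), u ⊆ J := by
  set S := Q.sup id
  set T := Finset.range m \ S
  have hun : u.Nonempty := RNCP_block_nonempty hP (Finset.mem_sdiff.mp hu).1
  have huT : u ⊆ T := U_subset_T hP hQP hu
  set x₀ := u.min' hun
  have hx₀ : x₀ ∈ u := u.min'_mem hun
  refine ⟨compOf S T x₀, mem_comps.mpr ⟨x₀, huT hx₀, rfl⟩, ?_⟩
  intro y hy
  rw [mem_compOf]
  refine ⟨huT hy, fun s hs h => ?_⟩
  have hx₀y : x₀ ≤ y := u.min'_le y hy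
  have := U_connected hP hQP hAdm hu hx₀ hy hs
  omega

lemma U_fiber_RNCP (hP : RNCP (Finset.range m) P) (hQP : Q ⊆ P) (hAdm : Adm Q (P \ Q))
    {J : Finset ℕ} (hJ : J ∈ comps (Q.sup id) (Finset.range m \ Q.sup id)) :
    RNCP J ((P \ Q).filter (· ⊆ J)) := by
  set S := Q.sup id
  set T := Finset.range m \ S
  have hST : Disjoint S T := Finset.disjoint_sdiff
  refine ⟨?_, ?_, ?_, ?_⟩
  · intro h
    exact hP.1 ((Finset.mem_sdiff.mp (Finset.mem_filter.mp h).1).1)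
  · intro B hB B' hB' hne
    exact hP.2.1 B (Finset.mem_sdiff.mp (Finset.mem_filter.mp hB).1).1
      B' (Finset.mem_sdiff.mp (Finset.mem_filter.mp hB').1).1 hne
  · apply Finset.Subset.antisymm
    · intro x hx
      obtain ⟨B, hB, hxB⟩ := Finset.mem_sup.mp hx
      exact (Finset.mem_filter.mp hB).2 hxB
    · intro x hxJ
      have hxT : x ∈ T := comps_subset hJ hxJ
      have hxm : x ∈ Finset.range m := (Finset.mem_sdiff.mp hxT).1
      have hxS : x ∉ S := (Finset.mem_sdiff.mp hxT).2
      obtain ⟨B, hB, hxB⟩ := Finset.mem_sup.mp (hP.2.2.1 ▸ hxm : x ∈ P.sup id)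
      have hBQ : B ∉ Q := by
        intro h
        exact hxS (Finset.mem_sup.mpr ⟨B, h, hxB⟩)
      have hBU : B ∈ P \ Q := Finset.mem_sdiff.mpr ⟨hB, hBQ⟩
      obtain ⟨J', hJ', hBJ'⟩ := U_block_in_comp hP hQP hAdm hBU
      have : J = J' := by
        rw [comps_eq_compOf hST hJ hxJ, comps_eq_compOf hST hJ' (hBJ' hxB)]
      rw [Finset.mem_sup]
      exact ⟨B, Finset.mem_filter.mpr ⟨hBU, this ▸ hBJ'⟩, hxB⟩
  · exact NoCrossing_subset ((Finset.filter_subset _ _).trans (Finset.sdiff_subset)) hP.2.2.2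

lemma forward_V_mem_WD (hP : RNCP (Finset.range m) P) (hQP : Q ⊆ P) (hAdm : Adm Q (P \ Q)) :
    P \ Q ∈ WD (comps (Q.sup id) (Finset.range m \ Q.sup id)) := by
  rw [mem_WD]
  exact ⟨fun u hu => U_block_in_comp hP hQP hAdm hu,
    fun J hJ => U_fiber_RNCP hP hQP hAdm hJ⟩

lemma forward_Q_RNCP (hP : RNCP (Finset.range m) P) (hQP : Q ⊆ P) :
    RNCP (Q.sup id) Q :=
  ⟨fun h => hP.1 (hQP h), fun B hB B' hB' hne => hP.2.1 B (hQP hB) B' (hQP hB') hne, rfl,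
    NoCrossing_subset hQP hP.2.2.2⟩

end Forward

section Backward

variable {m : ℕ} {S : Finset ℕ} {L V : PartData}

lemma V_sup (hV : V ∈ WD (comps S (Finset.range m \ S))) :
    V.sup id = Finset.range m \ S := by
  set T := Finset.range m \ S
  have hV' := mem_WD.mp hV
  apply Finset.Subset.antisymm
  · intro x hx
    obtain ⟨u, hu, hxu⟩ := Finset.mem_sup.mp hx
    obtain ⟨J, hJ, huJ⟩ := hV'.1 u hu
    exact comps_subset hJ (huJ hxu)
  · intro x hxT
    have hJ : compOf S T x ∈ comps S T := mem_comps.mpr ⟨x, hxT, rfl⟩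
    have hsup := (hV'.2 _ hJ).2.2.1
    have hx : x ∈ (V.filter (· ⊆ compOf S T x)).sup id := by
      rw [hsup]; exact self_mem_compOf hxT
    obtain ⟨u, hu, hxu⟩ := Finset.mem_sup.mp hx
    exact Finset.mem_sup.mpr ⟨u, (Finset.mem_filter.mp hu).1, hxu⟩

lemma L_V_disjoint (hL : RNCP S L) (hV : V ∈ WD (comps S (Finset.range m \ S))) :
    Disjoint L V := by
  rw [Finset.disjoint_left]
  intro B hB hBV
  have hBS : B ⊆ S := hL.2.2.1 ▸ block_subset_sup hB
  have hBn : B.Nonempty := RNCP_block_nonempty hL hB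
  obtain ⟨J, hJ, hBJ⟩ := (mem_WD.mp hV).1 B hBV
  obtain ⟨x, hx⟩ := hBn
  have hxT : x ∈ Finset.range m \ S := comps_subset hJ (hBJ hx)
  exact (Finset.mem_sdiff.mp hxT).2 (hBS hx)

lemma backward_NCP (hS : S ⊆ Finset.range m) (hL : RNCP S L)
    (hV : V ∈ WD (comps S (Finset.range m \ S))) :
    RNCP (Finset.range m) (L ∪ V) := by
  set T := Finset.range m \ S
  have hST : Disjoint S T := Finset.disjoint_sdiff
  have hV' := mem_WD.mp hV
  have hLS : ∀ B ∈ L, B ⊆ S := fun B hB => hL.2.2.1 ▸ block_subset_sup hB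
  have hcomp : ∀ u ∈ V, ∃ J ∈ comps S T, u ⊆ J := hV'.1
  refine ⟨?_, ?_, ?_, ?_⟩
  · intro h
    rcases Finset.mem_union.mp h with h|h
    · exact hL.1 h
    · obtain ⟨J, hJ, _⟩ := hcomp ∅ h
      exact (hV'.2 J hJ).1 (Finset.mem_filter.mpr ⟨h, Finset.empty_subset J⟩)
  · intro B hB B' hB' hne
    rcases Finset.mem_union.mp hB with h|h <;> rcases Finset.mem_union.mp hB' with h'|h'
    · exact hL.2.1 B h B' h' hne
    · obtain ⟨J, hJ, hBJ'⟩ := hcomp B' h'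
      exact Finset.disjoint_left.mpr (fun {x} hx hx' =>
        (Finset.mem_sdiff.mp (comps_subset hJ (hBJ' hx'))).2 (hLS B h hx))
    · obtain ⟨J, hJ, hBJ⟩ := hcomp B h
      exact Finset.disjoint_left.mpr (fun {x} hx hx' =>
        (Finset.mem_sdiff.mp (comps_subset hJ (hBJ hx))).2 (hLS B' h' hx'))
    · obtain ⟨J, hJ, hBJ⟩ := hcomp B h
      obtain ⟨J', hJ', hBJ'⟩ := hcomp B' h'
      by_cases hJJ : J = J'
      · subst hJJ
        exact (hV'.2 J hJ).2.1 B (Finset.mem_filter.mpr ⟨h, hBJ⟩)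
          B' (Finset.mem_filter.mpr ⟨h', hBJ'⟩) hne
      · exact Finset.disjoint_of_subset_left hBJ (Finset.disjoint_of_subset_right hBJ'
          (comps_disjoint hST hJ hJ' hJJ))
  · rw [Finset.sup_union, hL.2.2.1, V_sup hV]
    exact Finset.union_sdiff_of_subset hS
  · intro B hB B' hB' hne p₁ hp₁ p₂ hp₂ q₁ hq₁ q₂ hq₂ hcr
    rcases Finset.mem_union.mp hB with h|h <;> rcases Finset.mem_union.mp hB' with h'|h'
    · exact hL.2.2.2 B h B' h' hne p₁ hp₁ p₂ hp₂ q₁ hq₁ q₂ hq₂ hcr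
    · obtain ⟨J, hJ, hBJ'⟩ := hcomp B' h'
      exact comps_convex hST hJ (hBJ' hq₁) (hBJ' hq₂) (hLS B h hp₂) ⟨hcr.2.1, hcr.2.2⟩
    · obtain ⟨J, hJ, hBJ⟩ := hcomp B h
      exact comps_convex hST hJ (hBJ hp₁) (hBJ hp₂) (hLS B' h' hq₁) ⟨hcr.1, hcr.2.1⟩
    · obtain ⟨J, hJ, hBJ⟩ := hcomp B h
      obtain ⟨J', hJ', hBJ'⟩ := hcomp B' h'
      by_cases hJJ : J = J'
      · subst hJJ
        exact (hV'.2 J hJ).2.2.2 B (Finset.mem_filter.mpr ⟨h, hBJ⟩)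
          B' (Finset.mem_filter.mpr ⟨h', hBJ'⟩) hne p₁ hp₁ p₂ hp₂ q₁ hq₁ q₂ hq₂ hcr
      · obtain ⟨s, _, hsep⟩ := comps_separated hST hJ hJ' hJJ
        rcases hsep with ⟨h1, h2⟩|⟨h1, h2⟩
        · have := h1 p₂ (hBJ hp₂)
          have := h2 q₁ (hBJ' hq₁)
          omega
        · have := h1 q₁ (hBJ' hq₁)
          have := h2 p₁ (hBJ hp₁)
          omega

lemma backward_Adm (hL : RNCP S L) (hV : V ∈ WD (comps S (Finset.range m \ S))) :
    Adm L V := by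
  set T := Finset.range m \ S
  have hST : Disjoint S T := Finset.disjoint_sdiff
  intro q hq u hu hnest
  obtain ⟨J, hJ, huJ⟩ := (mem_WD.mp hV).1 u hu
  obtain ⟨x, hx⟩ := RNCP_block_nonempty hL hq
  obtain ⟨⟨a, ha, hax⟩, ⟨b, hb, hxb⟩⟩ := hnest x hx
  exact comps_convex hST hJ (huJ ha) (huJ hb) (hL.2.2.1 ▸ block_subset_sup hq hx) ⟨hax, hxb⟩

end Backward

-- ===== end auxiliary =====

noncomputable section

/-- `NC(A) = ⊕_{n ≥ 1} (span of partition data) ⊗ A^{⊗n}`: the space of `A`-decorated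
(non-crossing) partitions; the genuine non-crossing ones are singled out by `IsNCP`. -/
abbrev NCA (K : Type*) [Field K] (A : Type*) [Ring A] [Algebra K A] : Type _ :=
  DirectSum (PartData × ℕ) fun p => PiTensorProduct K fun _ : Fin (p.2 + 1) => A

/-- `T̄(NC(A))`: the tensor algebra over the space of decorated non-crossing partitions. -/
abbrev TNA (K : Type*) [Field K] (A : Type*) [Ring A] [Algebra K A] : Type _ :=
  TensorAlgebra K (NCA K A)

variable (K : Type*) [Field K] (A : Type*) [Ring A] [Algebra K A]

/-- The decorated partition `P ⊗ (a₀ ⋯ a_k)` as an element of the module `NC(A)`. -/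
def dvec (P : PartData) (k : ℕ) (a : ℕ → A) : NCA K A :=
  DirectSum.of (fun p : PartData × ℕ => PiTensorProduct K fun _ : Fin (p.2 + 1) => A)
    (P, k) (PiTensorProduct.tprod K fun i : Fin (k + 1) => a (i : ℕ))

/-- The decorated partition `P ⊗ (a₀ ⋯ a_{m-1})` (decoration of length `m`) as a single
bar-letter of `T̄(NC(A))`; length `0` gives the unit. -/
def dgen (P : PartData) (m : ℕ) (a : ℕ → A) : TNA K A :=
  match m with
  | 0 => 1
  | k + 1 => TensorAlgebra.ι K (dvec K A P k a)

/-- The decorated standardized piece `P' ⊗ a_S`: the partition `P'` decorated by the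
letters of `a` indexed by `S`, in increasing order. -/
def dsub (a : ℕ → A) (P' : PartData) (S : Finset ℕ) : TNA K A :=
  dgen K A P' S.card fun j => a ((S.sort (· ≤ ·)).getD j 0)

/-- The value of the coproduct on a decorated non-crossing partition `L ⊗ (a₀ ⋯ a_{n-1})`:
`Σ_{L = Q ⊔_adm U} (st(Q) ⊗ a_Q) ⊗ (st(J₁^{L,Q}) ⊗ a_{J₁^{L,Q}} | ⋯ )`. -/
def dcopF (P : PartData) (a : ℕ → A) : TNA K A ⊗[K] TNA K A :=
  ∑ Q ∈ P.powerset.filter (fun Q => Adm Q (P \ Q)),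
    dsub K A a (stdParts Q) (Q.sup id) ⊗ₜ[K]
      ((comps (Q.sup id) (P.sup id \ Q.sup id)).map fun J =>
        dsub K A a (stdParts ((P \ Q).filter (· ⊆ J))) J).prod

/-- The value of the left half-coproduct `Δ_≺⁺`: the part of the sum where the block
containing the first element (here `0`) lies in `Q`. -/
def dcopP (P : PartData) (a : ℕ → A) : TNA K A ⊗[K] TNA K A :=
  ∑ Q ∈ P.powerset.filter (fun Q => Adm Q (P \ Q) ∧ ∃ q ∈ Q, 0 ∈ q),
    dsub K A a (stdParts Q) (Q.sup id) ⊗ₜ[K]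
      ((comps (Q.sup id) (P.sup id \ Q.sup id)).map fun J =>
        dsub K A a (stdParts ((P \ Q).filter (· ⊆ J))) J).prod

/-- The value of the right half-coproduct `Δ_≻⁺`: the part of the sum where the block
containing the first element (here `0`) lies in `U`. -/
def dcopS (P : PartData) (a : ℕ → A) : TNA K A ⊗[K] TNA K A :=
  ∑ Q ∈ P.powerset.filter (fun Q => Adm Q (P \ Q) ∧ ∃ u ∈ P \ Q, 0 ∈ u),
    dsub K A a (stdParts Q) (Q.sup id) ⊗ₜ[K]
      ((comps (Q.sup id) (P.sup id \ Q.sup id)).map fun J =>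
        dsub K A a (stdParts ((P \ Q).filter (· ⊆ J))) J).prod

/-- The set of bar-words of genuine decorated non-crossing partitions in `T̄(NC(A))`. -/
def DWord : Set (TNA K A) :=
  {x | ∃ l : List (PartData × ℕ × (ℕ → A)),
        (∀ t ∈ l, 1 ≤ t.2.1 ∧ IsNCP t.2.1 t.1) ∧
        x = (l.map fun t => dgen K A t.1 t.2.1 t.2.2).prod}

/-- The set of nonempty bar-words of genuine decorated non-crossing partitions. -/
def DWordPos : Set (TNA K A) :=
  {x | ∃ l : List (PartData × ℕ × (ℕ → A)), l ≠ [] ∧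
        (∀ t ∈ l, 1 ≤ t.2.1 ∧ IsNCP t.2.1 t.1) ∧
        x = (l.map fun t => dgen K A t.1 t.2.1 t.2.2).prod}

/-- `T̄(NC(A))` proper: the span of all words of genuine decorated non-crossing
partitions. -/
def DSpan : Submodule K (TNA K A) := Submodule.span K (DWord K A)

/-- `T(NC(A))`: the augmentation ideal, the span of all nonempty words of genuine
decorated non-crossing partitions. -/
def DIdeal : Submodule K (TNA K A) := Submodule.span K (DWordPos K A)

/-- The augmentation (counit) `e` of `T̄(NC(A))`: `e(1) = 1`, `e = 0` on `T(NC(A))`. -/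
def augD : TNA K A →ₐ[K] K := TensorAlgebra.lift K (0 : NCA K A →ₗ[K] K)

/-- Half-convolution / convolution of linear forms with respect to a (half-)coproduct
`D` on `T̄(NC(A))`: `f ⋆_D g := m_K ∘ (f ⊗ g) ∘ D`. -/
def convD (D : TNA K A →ₗ[K] TNA K A ⊗[K] TNA K A) (f g : TNA K A →ₗ[K] K) :
    TNA K A →ₗ[K] K :=
  LinearMap.mul' K K ∘ₗ TensorProduct.map f g ∘ₗ D

/-- The linear map `x ↦ x ⊗ 1` on `T̄(NC(A))`. -/
def rOneD : TNA K A →ₗ[K] TNA K A ⊗[K] TNA K A :=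
  (TensorProduct.mk K (TNA K A) (TNA K A)).flip 1

/-- The linear map `x ↦ 1 ⊗ x` on `T̄(NC(A))`. -/
def lOneD : TNA K A →ₗ[K] TNA K A ⊗[K] TNA K A :=
  TensorProduct.mk K (TNA K A) (TNA K A) 1

end

noncomputable section

/-- `T(A) = ⊕_{n ≥ 1} A^{⊗n}`, the positive part of the tensor algebra over `A`. -/
abbrev Tpos (K : Type*) [Field K] (A : Type*) [Ring A] [Algebra K A] : Type _ :=
  DirectSum ℕ fun n => PiTensorProduct K fun _ : Fin (n + 1) => A

/-- `T̄(T(A))`: the double tensor algebra over `A`. -/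
abbrev TT (K : Type*) [Field K] (A : Type*) [Ring A] [Algebra K A] : Type _ :=
  TensorAlgebra K (Tpos K A)

variable (K : Type*) [Field K] (A : Type*) [Ring A] [Algebra K A]

/-- The word `a₀ ⋯ a_k` as an element of the module `T(A)`. -/
def tvec (k : ℕ) (a : ℕ → A) : Tpos K A :=
  DirectSum.of (fun n => PiTensorProduct K fun _ : Fin (n + 1) => A) k
    (PiTensorProduct.tprod K fun i : Fin (k + 1) => a (i : ℕ))

/-- The word `a₀ ⋯ a_{m-1}` (of length `m`) as a single bar-letter of `T̄(T(A))`;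
the empty word is the unit. -/
def wrd (m : ℕ) (a : ℕ → A) : TT K A :=
  match m with
  | 0 => 1
  | k + 1 => TensorAlgebra.ι K (tvec K A k a)

/-- The subword `a_S` of the letters indexed by `S`, in increasing order. -/
def sw (a : ℕ → A) (S : Finset ℕ) : TT K A :=
  wrd K A S.card fun j => a ((S.sort (· ≤ ·)).getD j 0)

/-- The value of the coproduct on a word of length `m`:
`Δ(a₀ ⋯ a_{m-1}) = Σ_{S ⊆ [m]} a_S ⊗ (a_{J₁}|⋯|a_{J_k})`, `J₁,…,J_k` the connected
components of `[m] − S`. -/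
def wcopF (m : ℕ) (a : ℕ → A) : TT K A ⊗[K] TT K A :=
  ∑ S ∈ (Finset.range m).powerset,
    sw K A a S ⊗ₜ[K] ((comps S (Finset.range m \ S)).map (sw K A a)).prod

/-- The value of the left half-coproduct `Δ_≺⁺` on a word: the part of the sum with
`S` containing the first position. -/
def wcopP (m : ℕ) (a : ℕ → A) : TT K A ⊗[K] TT K A :=
  ∑ S ∈ (Finset.range m).powerset.filter (fun S => 0 ∈ S),
    sw K A a S ⊗ₜ[K] ((comps S (Finset.range m \ S)).map (sw K A a)).prod

/-- The value of the right half-coproduct `Δ_≻⁺` on a word: the part of the sum with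
`S` not containing the first position. -/
def wcopS (m : ℕ) (a : ℕ → A) : TT K A ⊗[K] TT K A :=
  ∑ S ∈ (Finset.range m).powerset.filter (fun S => 0 ∉ S),
    sw K A a S ⊗ₜ[K] ((comps S (Finset.range m \ S)).map (sw K A a)).prod

/-- The augmentation ideal `T(T(A))` of `T̄(T(A))`. -/
def TIdeal : Submodule K (TT K A) :=
  Submodule.span K {x | ∃ (v : Tpos K A) (y : TT K A), x = TensorAlgebra.ι K v * y}

/-- The augmentation (counit) of `T̄(T(A))`. -/
def augT : TT K A →ₐ[K] K := TensorAlgebra.lift K (0 : Tpos K A →ₗ[K] K)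

/-- The linear map `x ↦ x ⊗ 1` on `T̄(T(A))`. -/
def rOneT : TT K A →ₗ[K] TT K A ⊗[K] TT K A :=
  (TensorProduct.mk K (TT K A) (TT K A)).flip 1

/-- The linear map `x ↦ 1 ⊗ x` on `T̄(T(A))`. -/
def lOneT : TT K A →ₗ[K] TT K A ⊗[K] TT K A :=
  TensorProduct.mk K (TT K A) (TT K A) 1

/-- Half-convolution / convolution of linear forms with respect to a (half-)coproduct `D`:
`f ⋆_D g := m_K ∘ (f ⊗ g) ∘ D`. -/
def convT (D : TT K A →ₗ[K] TT K A ⊗[K] TT K A) (f g : TT K A →ₗ[K] K) :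
    TT K A →ₗ[K] K :=
  LinearMap.mul' K K ∘ₗ TensorProduct.map f g ∘ₗ D

end

noncomputable section

variable (K : Type*) [Field K] (A : Type*) [Ring A] [Algebra K A]

/-- The value of the splitting map on a word:
`Sp(a₁⋯aₙ) = Σ_{L ∈ NC_n} L ⊗ (a₁⋯aₙ)`. -/
def spWord (m : ℕ) (a : ℕ → A) : TNA K A :=
  ∑ P ∈ NCset m, dgen K A P m a

end


-- ===== CORE combinatorial identity =====
noncomputable section

lemma comps_pairwise_disjoint {S T : Finset ℕ} (hST : Disjoint S T) :
    (comps S T).Pairwise (fun J J' => Disjoint J J') := by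
  have hnd : (comps S T).Nodup := List.nodup_dedup _
  exact hnd.imp_of_mem (fun {J J'} hJ hJ' hne => comps_disjoint hST hJ hJ' hne)

variable (K : Type*) [Field K] (A : Type*) [Ring A] [Algebra K A]

lemma core_identity (m : ℕ) (a : ℕ → A) (cond : Finset ℕ → Prop) [DecidablePred cond] :
    (∑ P ∈ NCset m, ∑ Q ∈ P.powerset.filter (fun Q => Adm Q (P \ Q) ∧ cond (Q.sup id)),
      dsub K A a (stdParts Q) (Q.sup id) ⊗ₜ[K]
        ((comps (Q.sup id) (P.sup id \ Q.sup id)).map fun J =>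
          dsub K A a (stdParts ((P \ Q).filter (· ⊆ J))) J).prod)
    = ∑ S ∈ (Finset.range m).powerset.filter cond,
        (∑ L ∈ NCset S.card, dsub K A a L S) ⊗ₜ[K]
          ((comps S (Finset.range m \ S)).map fun J =>
            ∑ L ∈ NCset J.card, dsub K A a L J).prod := by
  have step0 :
      (∑ P ∈ NCset m, ∑ Q ∈ P.powerset.filter (fun Q => Adm Q (P \ Q) ∧ cond (Q.sup id)),
        dsub K A a (stdParts Q) (Q.sup id) ⊗ₜ[K]
          ((comps (Q.sup id) (P.sup id \ Q.sup id)).map fun J =>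
            dsub K A a (stdParts ((P \ Q).filter (· ⊆ J))) J).prod)
      = ∑ P ∈ NCset m, ∑ Q ∈ P.powerset.filter (fun Q => Adm Q (P \ Q) ∧ cond (Q.sup id)),
        dsub K A a (stdParts Q) (Q.sup id) ⊗ₜ[K]
          ((comps (Q.sup id) (Finset.range m \ Q.sup id)).map fun J =>
            dsub K A a (stdParts ((P \ Q).filter (· ⊆ J))) J).prod := by
    refine Finset.sum_congr rfl fun P hP => Finset.sum_congr rfl fun Q _ => ?_
    rw [(mem_NCset.mp hP).2.2.1]
  rw [step0]
  rw [Finset.sum_sigma' (NCset m)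
    (fun P => P.powerset.filter (fun Q => Adm Q (P \ Q) ∧ cond (Q.sup id)))
    (fun P Q => dsub K A a (stdParts Q) (Q.sup id) ⊗ₜ[K]
      ((comps (Q.sup id) (Finset.range m \ Q.sup id)).map fun J =>
        dsub K A a (stdParts ((P \ Q).filter (· ⊆ J))) J).prod)]
  have step2 :
      (∑ x ∈ (NCset m).sigma
          (fun P => P.powerset.filter (fun Q => Adm Q (P \ Q) ∧ cond (Q.sup id))),
        dsub K A a (stdParts x.2) (x.2.sup id) ⊗ₜ[K]
          ((comps (x.2.sup id) (Finset.range m \ x.2.sup id)).map fun J =>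
            dsub K A a (stdParts ((x.1 \ x.2).filter (· ⊆ J))) J).prod)
      = ∑ y ∈ ((Finset.range m).powerset.filter cond).sigma
          (fun S => RNC S ×ˢ WD (comps S (Finset.range m \ S))),
        dsub K A a (stdParts y.2.1) y.1 ⊗ₜ[K]
          ((comps y.1 (Finset.range m \ y.1)).map fun J =>
            dsub K A a (stdParts (y.2.2.filter (· ⊆ J))) J).prod := by
    refine Finset.sum_nbij' (fun x => ⟨x.2.sup id, (x.2, x.1 \ x.2)⟩)
      (fun y => ⟨y.2.1 ∪ y.2.2, y.2.1⟩) ?_ ?_ ?_ ?_ ?_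
    · rintro ⟨P, Q⟩ hx
      rw [Finset.mem_sigma] at hx
      obtain ⟨hP, hQ⟩ := hx
      rw [Finset.mem_filter, Finset.mem_powerset] at hQ
      obtain ⟨hQP, hAdm, hcond⟩ := hQ
      have hPr : RNCP (Finset.range m) P := IsNCP_iff_RNCP.mp (mem_NCset.mp hP)
      rw [Finset.mem_sigma, Finset.mem_filter, Finset.mem_powerset, Finset.mem_product]
      refine ⟨⟨?_, hcond⟩, ?_, ?_⟩
      · exact hPr.2.2.1 ▸ Finset.sup_mono hQP
      · exact mem_RNC.mpr (forward_Q_RNCP hPr hQP)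
      · exact forward_V_mem_WD hPr hQP hAdm
    · rintro ⟨S, L, V⟩ hy
      rw [Finset.mem_sigma, Finset.mem_filter, Finset.mem_powerset, Finset.mem_product] at hy
      obtain ⟨⟨hS, hcond⟩, hL, hV⟩ := hy
      have hLr : RNCP S L := mem_RNC.mp hL
      have hdisj : Disjoint L V := L_V_disjoint hLr hV
      have hsd : (L ∪ V) \ L = V := Finset.union_sdiff_cancel_left hdisj
      rw [Finset.mem_sigma, Finset.mem_filter, Finset.mem_powerset]
      refine ⟨mem_NCset.mpr (IsNCP_iff_RNCP.mpr (backward_NCP hS hLr hV)),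
        Finset.subset_union_left, ?_, ?_⟩
      · rw [hsd]
        exact backward_Adm hLr hV
      · rw [hLr.2.2.1]
        exact hcond
    · rintro ⟨P, Q⟩ hx
      rw [Finset.mem_sigma] at hx
      have hQP : Q ⊆ P := Finset.mem_powerset.mp (Finset.mem_filter.mp hx.2).1
      show (⟨Q ∪ (P \ Q), Q⟩ : Σ _ : PartData, PartData) = ⟨P, Q⟩
      rw [Finset.union_sdiff_of_subset hQP]
    · rintro ⟨S, L, V⟩ hy
      rw [Finset.mem_sigma, Finset.mem_filter, Finset.mem_powerset, Finset.mem_product] at hy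
      obtain ⟨⟨hS, hcond⟩, hL, hV⟩ := hy
      have hLr : RNCP S L := mem_RNC.mp hL
      have hsd : (L ∪ V) \ L = V := Finset.union_sdiff_cancel_left (L_V_disjoint hLr hV)
      show (⟨L.sup id, (L, (L ∪ V) \ L)⟩ : Σ _ : Finset ℕ, PartData × PartData) = ⟨S, (L, V)⟩
      rw [hsd, hLr.2.2.1]
    · rintro ⟨P, Q⟩ _
      rfl
  rw [step2, Finset.sum_sigma]
  refine Finset.sum_congr rfl fun S hS => ?_
  rw [Finset.sum_product]
  dsimp only
  have tstep : ∀ L ∈ RNC S,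
      (∑ V ∈ WD (comps S (Finset.range m \ S)),
        dsub K A a (stdParts L) S ⊗ₜ[K]
          ((comps S (Finset.range m \ S)).map fun J =>
            dsub K A a (stdParts (V.filter (· ⊆ J))) J).prod)
      = dsub K A a (stdParts L) S ⊗ₜ[K]
          ((comps S (Finset.range m \ S)).map fun J =>
            ∑ L' ∈ NCset J.card, dsub K A a L' J).prod := by
    intro L _
    rw [← TensorProduct.tmul_sum]
    congr 1
    rw [WD_prod (fun J L' => dsub K A a (stdParts L') J) _
      (comps_pairwise_disjoint Finset.disjoint_sdiff)
      (fun J hJ => comps_nonempty hJ)]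
    congr 1
    apply List.map_congr_left
    intro J _
    rw [sum_RNC J (fun L' => dsub K A a L' J), ← NCset_eq_RNC]
  rw [Finset.sum_congr rfl tstep, ← TensorProduct.sum_tmul]
  congr 1
  rw [sum_RNC S (fun L' => dsub K A a L' S), ← NCset_eq_RNC]

end


-- ===== splitting map computations =====
noncomputable section
variable (K : Type*) [Field K] (A : Type*) [Ring A] [Algebra K A]

lemma Sp_sw (Sp : TT K A →ₐ[K] TNA K A)
    (hSp : ∀ (m : ℕ) (b : ℕ → A), Sp (wrd K A m b) = spWord K A m b)
    (a : ℕ → A) (S : Finset ℕ) :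
    Sp (sw K A a S) = ∑ L ∈ NCset S.card, dsub K A a L S := by
  rw [sw, hSp, spWord]
  rfl

lemma M_wcop_term (Sp : TT K A →ₐ[K] TNA K A)
    (hSp : ∀ (m : ℕ) (b : ℕ → A), Sp (wrd K A m b) = spWord K A m b)
    (a : ℕ → A) (S : Finset ℕ) (l : List (Finset ℕ)) :
    (Algebra.TensorProduct.map Sp Sp) (sw K A a S ⊗ₜ[K] (l.map (sw K A a)).prod)
      = (∑ L ∈ NCset S.card, dsub K A a L S) ⊗ₜ[K]
          (l.map (fun J => ∑ L ∈ NCset J.card, dsub K A a L J)).prod := by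
  rw [Algebra.TensorProduct.map_tmul, Sp_sw K A Sp hSp, map_list_prod, List.map_map]
  congr 1
  congr 1
  apply List.map_congr_left
  intro J _
  exact Sp_sw K A Sp hSp a J

lemma keyF (Sp : TT K A →ₐ[K] TNA K A)
    (hSp : ∀ (m : ℕ) (b : ℕ → A), Sp (wrd K A m b) = spWord K A m b)
    (ΔN : TNA K A →ₐ[K] TNA K A ⊗[K] TNA K A)
    (hΔN : ∀ (m : ℕ) (P : PartData) (b : ℕ → A), IsNCP m P →
      ΔN (dgen K A P m b) = dcopF K A P b)
    (m : ℕ) (a : ℕ → A) :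
    ΔN (Sp (wrd K A m a))
      = (Algebra.TensorProduct.map Sp Sp) (wcopF K A m a) := by
  rw [hSp, spWord, map_sum]
  have e1 : ∀ P ∈ NCset m, ΔN (dgen K A P m a) = dcopF K A P a :=
    fun P hP => hΔN m P a (mem_NCset.mp hP)
  rw [Finset.sum_congr rfl e1]
  have e2 : ∀ P ∈ NCset m,
      dcopF K A P a
        = ∑ Q ∈ P.powerset.filter
            (fun Q => Adm Q (P \ Q) ∧ (fun _ : Finset ℕ => True) (Q.sup id)),
          dsub K A a (stdParts Q) (Q.sup id) ⊗ₜ[K]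
            ((comps (Q.sup id) (P.sup id \ Q.sup id)).map fun J =>
              dsub K A a (stdParts ((P \ Q).filter (· ⊆ J))) J).prod := by
    intro P _
    rw [dcopF]
    congr 1
    apply Finset.filter_congr
    intro Q _
    simp
  rw [Finset.sum_congr rfl e2, core_identity K A m a (fun _ => True)]
  rw [wcopF, map_sum]
  rw [Finset.filter_true]
  refine Finset.sum_congr rfl fun S _ => ?_
  exact (M_wcop_term K A Sp hSp a S _).symm

lemma keyP (Sp : TT K A →ₐ[K] TNA K A)
    (hSp : ∀ (m : ℕ) (b : ℕ → A), Sp (wrd K A m b) = spWord K A m b)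
    (m : ℕ) (a : ℕ → A) :
    (∑ P ∈ NCset m, dcopP K A P a)
      = (Algebra.TensorProduct.map Sp Sp) (wcopP K A m a) := by
  have e2 : ∀ P ∈ NCset m,
      dcopP K A P a
        = ∑ Q ∈ P.powerset.filter
            (fun Q => Adm Q (P \ Q) ∧ (fun S : Finset ℕ => 0 ∈ S) (Q.sup id)),
          dsub K A a (stdParts Q) (Q.sup id) ⊗ₜ[K]
            ((comps (Q.sup id) (P.sup id \ Q.sup id)).map fun J =>
              dsub K A a (stdParts ((P \ Q).filter (· ⊆ J))) J).prod := by
    intro P _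
    rw [dcopP]
    congr 1
    apply Finset.filter_congr
    intro Q _
    simp only [and_congr_right_iff]
    intro _
    rw [Finset.mem_sup]
    simp [id]
  rw [Finset.sum_congr rfl e2, core_identity K A m a (fun S => 0 ∈ S)]
  rw [wcopP, map_sum]
  refine Finset.sum_congr rfl fun S _ => ?_
  exact (M_wcop_term K A Sp hSp a S _).symm

lemma keyS (Sp : TT K A →ₐ[K] TNA K A)
    (hSp : ∀ (m : ℕ) (b : ℕ → A), Sp (wrd K A m b) = spWord K A m b)
    (m : ℕ) (hm : 0 < m) (a : ℕ → A) :
    (∑ P ∈ NCset m, dcopS K A P a)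
      = (Algebra.TensorProduct.map Sp Sp) (wcopS K A m a) := by
  have e2 : ∀ P ∈ NCset m,
      dcopS K A P a
        = ∑ Q ∈ P.powerset.filter
            (fun Q => Adm Q (P \ Q) ∧ (fun S : Finset ℕ => 0 ∉ S) (Q.sup id)),
          dsub K A a (stdParts Q) (Q.sup id) ⊗ₜ[K]
            ((comps (Q.sup id) (P.sup id \ Q.sup id)).map fun J =>
              dsub K A a (stdParts ((P \ Q).filter (· ⊆ J))) J).prod := by
    intro P hP
    have hPr : RNCP (Finset.range m) P := IsNCP_iff_RNCP.mp (mem_NCset.mp hP)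
    rw [dcopS]
    congr 1
    apply Finset.filter_congr
    intro Q hQ
    rw [Finset.mem_powerset] at hQ
    simp only [and_congr_right_iff]
    intro _
    constructor
    · rintro ⟨u, hu, h0u⟩ h0S
      obtain ⟨q, hq, h0q⟩ := Finset.mem_sup.mp h0S
      have hqu : q ≠ u := fun h => (Finset.mem_sdiff.mp hu).2 (h ▸ hq)
      exact (Finset.disjoint_left.mp
        (hPr.2.1 q (hQ hq) u (Finset.mem_sdiff.mp hu).1 hqu) h0q) h0u
    · intro h0S
      have h0m : (0 : ℕ) ∈ P.sup id := by
        rw [hPr.2.2.1]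
        exact Finset.mem_range.mpr hm
      obtain ⟨B, hB, h0B⟩ := Finset.mem_sup.mp h0m
      have hBQ : B ∉ Q := fun h => h0S (Finset.mem_sup.mpr ⟨B, h, h0B⟩)
      exact ⟨B, Finset.mem_sdiff.mpr ⟨hB, hBQ⟩, h0B⟩
  rw [Finset.sum_congr rfl e2, core_identity K A m a (fun S => 0 ∉ S)]
  rw [wcopS, map_sum]
  refine Finset.sum_congr rfl fun S _ => ?_
  exact (M_wcop_term K A Sp hSp a S _).symm

/-- the span of the elementary words exhausts `T(A)` -/
lemma tvec_span (v : Tpos K A) :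
    v ∈ Submodule.span K {w : Tpos K A | ∃ n b, w = tvec K A n b} := by
  induction v using DirectSum.induction_on with
  | zero => exact Submodule.zero_mem _
  | of n t =>
    induction t using PiTensorProduct.induction_on with
    | smul_tprod r f =>
      have h1 : DirectSum.of (fun n => PiTensorProduct K fun _ : Fin (n + 1) => A) n
          (r • PiTensorProduct.tprod K f)
          = r • DirectSum.of (fun n => PiTensorProduct K fun _ : Fin (n + 1) => A) n
            (PiTensorProduct.tprod K f) := by
        rw [← DirectSum.lof_eq_of K, map_smul, DirectSum.lof_eq_of]
      rw [h1]
      apply Submodule.smul_mem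
      apply Submodule.subset_span
      refine ⟨n, fun i => if h : i < n + 1 then f ⟨i, h⟩ else 0, ?_⟩
      have hfa : (fun i : Fin (n + 1) =>
          (fun j => if h : j < n + 1 then f ⟨j, h⟩ else 0) (i : ℕ)) = f := by
        funext i
        simp [i.isLt]
      rw [tvec]
      congr 1
      exact congrArg (PiTensorProduct.tprod K) hfa.symm
    | add x y hx hy =>
      rw [map_add]
      exact Submodule.add_mem _ hx hy
  | add x y hx hy => exact Submodule.add_mem _ hx hy

end


-- ===== reduction lemmas =====
noncomputable section
variable (K : Type*) [Field K] (A : Type*) [Ring A] [Algebra K A]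

set_option maxHeartbeats 2000000 in
lemma half_intertwine
    (Sp : TT K A →ₐ[K] TNA K A)
    (hSp : ∀ (m : ℕ) (b : ℕ → A), Sp (wrd K A m b) = spWord K A m b)
    (ΔN : TNA K A →ₐ[K] TNA K A ⊗[K] TNA K A)
    (ΔT : TT K A →ₐ[K] TT K A ⊗[K] TT K A)
    (h3 : ∀ x : TT K A, ΔN (Sp x) = (Algebra.TensorProduct.map Sp Sp) (ΔT x))
    (ΔpN : TNA K A →ₗ[K] TNA K A ⊗[K] TNA K A)
    (ΔpT : TT K A →ₗ[K] TT K A ⊗[K] TT K A)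
    (dP : PartData → (ℕ → A) → TNA K A ⊗[K] TNA K A)
    (wP : ℕ → (ℕ → A) → TT K A ⊗[K] TT K A)
    (hkey : ∀ (n : ℕ) (b : ℕ → A),
      (∑ P ∈ NCset (n + 1), dP P b) = (Algebra.TensorProduct.map Sp Sp) (wP (n + 1) b))
    (hpNgen : ∀ (n : ℕ) (P : PartData) (b : ℕ → A), IsNCP (n + 1) P →
      ΔpN (dgen K A P (n + 1) b) = dP P b)
    (hpTgen : ∀ (n : ℕ) (b : ℕ → A), ΔpT (wrd K A (n + 1) b) = wP (n + 1) b)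
    (hpNext : ∀ (v : NCA K A) (y : TNA K A),
      ΔpN (TensorAlgebra.ι K v * y) = ΔpN (TensorAlgebra.ι K v) * ΔN y)
    (hpText : ∀ (v : Tpos K A) (y : TT K A),
      ΔpT (TensorAlgebra.ι K v * y) = ΔpT (TensorAlgebra.ι K v) * ΔT y) :
    ∀ x ∈ TIdeal K A, ΔpN (Sp x) = (Algebra.TensorProduct.map Sp Sp) (ΔpT x) := by
  have vlemma : ∀ (v : Tpos K A) (y : TT K A),
      ΔpN (Sp (TensorAlgebra.ι K v * y))
        = (Algebra.TensorProduct.map Sp Sp) (ΔpT (TensorAlgebra.ι K v * y)) := by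
    intro v
    refine Submodule.span_induction (p := fun w _ => ∀ y : TT K A,
      ΔpN (Sp (TensorAlgebra.ι K w * y))
        = (Algebra.TensorProduct.map Sp Sp) (ΔpT (TensorAlgebra.ι K w * y)))
      ?_ ?_ ?_ ?_ (tvec_span K A v)
    · rintro w ⟨n, b, rfl⟩ y
      have hw : TensorAlgebra.ι K (tvec K A n b) = wrd K A (n + 1) b := rfl
      have hr : (Algebra.TensorProduct.map Sp Sp) (ΔpT (TensorAlgebra.ι K (tvec K A n b) * y))
          = (Algebra.TensorProduct.map Sp Sp) (wP (n + 1) b)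
            * (Algebra.TensorProduct.map Sp Sp) (ΔT y) := by
        rw [hpText, hw, hpTgen, map_mul]
      have hl : ΔpN (Sp (TensorAlgebra.ι K (tvec K A n b) * y))
          = (∑ P ∈ NCset (n + 1), dP P b) * ΔN (Sp y) := by
        rw [map_mul, hw, hSp, spWord, Finset.sum_mul, map_sum]
        have e : ∀ P ∈ NCset (n + 1),
            ΔpN (dgen K A P (n + 1) b * Sp y) = dP P b * ΔN (Sp y) := by
          intro P hP
          have hd : dgen K A P (n + 1) b = TensorAlgebra.ι K (dvec K A P n b) := rfl
          rw [hd, hpNext, ← hd, hpNgen n P b (mem_NCset.mp hP)]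
        rw [Finset.sum_congr rfl e, ← Finset.sum_mul]
      rw [hl, hr, hkey n b, h3 y]
    · intro y
      have h0 : TensorAlgebra.ι K (0 : Tpos K A) = 0 := map_zero _
      simp only [h0, zero_mul, map_zero]
    · intro w w' _ _ ih ih' y
      have h0 : TensorAlgebra.ι K (w + w') = TensorAlgebra.ι K w + TensorAlgebra.ι K w' :=
        map_add _ _ _
      rw [h0, add_mul, map_add Sp, map_add ΔpN, map_add ΔpT,
        map_add (Algebra.TensorProduct.map Sp Sp), ih y, ih' y]
    · intro r w _ ih y
      have h0 : TensorAlgebra.ι K (r • w) = r • TensorAlgebra.ι K w := map_smul _ _ _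
      rw [h0, smul_mul_assoc, map_smul Sp, map_smul ΔpN, map_smul ΔpT,
        map_smul (Algebra.TensorProduct.map Sp Sp), ih y]
  intro x hx
  refine Submodule.span_induction (p := fun w _ =>
      ΔpN (Sp w) = (Algebra.TensorProduct.map Sp Sp) (ΔpT w)) ?_ ?_ ?_ ?_ hx
  · rintro w ⟨v, y, rfl⟩
    exact vlemma v y
  · simp only [map_zero]
  · intro w w' _ _ ih ih'
    rw [map_add Sp, map_add ΔpN, map_add ΔpT,
      map_add (Algebra.TensorProduct.map Sp Sp), ih, ih']
  · intro r w _ ih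
    rw [map_smul Sp, map_smul ΔpN, map_smul ΔpT,
      map_smul (Algebra.TensorProduct.map Sp Sp), ih]

end

set_option maxHeartbeats 4000000 in
/-- The splitting map `Sp : T̄(T(A)) → T̄(NC(A))`,
`Sp(a₁⋯aₙ) = Σ_{L∈NC_n} L⊗(a₁⋯aₙ)` extended multiplicatively, is a morphism of
unshuffle bialgebras: it is multiplicative and unital, and it intertwines the
coproducts and half-coproducts. -/
theorem splitting_map_is_unshuffle_bialgebra_morphism
    (K : Type*) [Field K] [CharZero K] (A : Type*) [Ring A] [Algebra K A]
    -- the coproduct and half-coproducts of T̄(T(A))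
    (ΔT : TT K A →ₐ[K] TT K A ⊗[K] TT K A)
    (hΔT : ∀ (m : ℕ) (a : ℕ → A), ΔT (wrd K A m a) = wcopF K A m a)
    (ΔpT ΔsT : TT K A →ₗ[K] TT K A ⊗[K] TT K A)
    (hpTgen : ∀ (m : ℕ) (a : ℕ → A), ΔpT (wrd K A (m + 1) a) = wcopP K A (m + 1) a)
    (hsTgen : ∀ (m : ℕ) (a : ℕ → A), ΔsT (wrd K A (m + 1) a) = wcopS K A (m + 1) a)
    (hpText : ∀ (v : Tpos K A) (y : TT K A),
      ΔpT (TensorAlgebra.ι K v * y) = ΔpT (TensorAlgebra.ι K v) * ΔT y)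
    (hsText : ∀ (v : Tpos K A) (y : TT K A),
      ΔsT (TensorAlgebra.ι K v * y) = ΔsT (TensorAlgebra.ι K v) * ΔT y)
    -- the coproduct and half-coproducts of T̄(NC(A))
    (ΔN : TNA K A →ₐ[K] TNA K A ⊗[K] TNA K A)
    (hΔN : ∀ (m : ℕ) (P : PartData) (a : ℕ → A), IsNCP m P →
      ΔN (dgen K A P m a) = dcopF K A P a)
    (ΔpN ΔsN : TNA K A →ₗ[K] TNA K A ⊗[K] TNA K A)
    (hpNgen : ∀ (m : ℕ) (P : PartData) (a : ℕ → A), IsNCP m P →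
      ΔpN (dgen K A P m a) = dcopP K A P a)
    (hsNgen : ∀ (m : ℕ) (P : PartData) (a : ℕ → A), IsNCP m P →
      ΔsN (dgen K A P m a) = dcopS K A P a)
    (hpNext : ∀ (v : NCA K A) (y : TNA K A),
      ΔpN (TensorAlgebra.ι K v * y) = ΔpN (TensorAlgebra.ι K v) * ΔN y)
    (hsNext : ∀ (v : NCA K A) (y : TNA K A),
      ΔsN (TensorAlgebra.ι K v * y) = ΔsN (TensorAlgebra.ι K v) * ΔN y)
    -- the splitting map
    (Sp : TT K A →ₐ[K] TNA K A)
    (hSp : ∀ (m : ℕ) (a : ℕ → A), Sp (wrd K A m a) = spWord K A m a) :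
    -- Sp is multiplicative and unital
    (∀ x y : TT K A, Sp (x * y) = Sp x * Sp y) ∧ (Sp 1 = 1) ∧
    -- Δ ∘ Sp = (Sp ⊗ Sp) ∘ Δ
    (∀ x : TT K A, ΔN (Sp x) = (Algebra.TensorProduct.map Sp Sp) (ΔT x)) ∧
    -- Δ_≺⁺ ∘ Sp = (Sp ⊗ Sp) ∘ Δ_≺⁺
    (∀ x ∈ TIdeal K A, ΔpN (Sp x) = (Algebra.TensorProduct.map Sp Sp) (ΔpT x)) ∧
    -- Δ_≻⁺ ∘ Sp = (Sp ⊗ Sp) ∘ Δ_≻⁺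
    (∀ x ∈ TIdeal K A, ΔsN (Sp x) = (Algebra.TensorProduct.map Sp Sp) (ΔsT x)) := by
  have hgen : ∀ v : Tpos K A, ΔN (Sp (TensorAlgebra.ι K v))
      = (Algebra.TensorProduct.map Sp Sp) (ΔT (TensorAlgebra.ι K v)) := by
    intro v
    refine Submodule.span_induction (p := fun w _ => ΔN (Sp (TensorAlgebra.ι K w))
      = (Algebra.TensorProduct.map Sp Sp) (ΔT (TensorAlgebra.ι K w)))
      ?_ ?_ ?_ ?_ (tvec_span K A v)
    · rintro w ⟨n, b, rfl⟩
      have hw : TensorAlgebra.ι K (tvec K A n b) = wrd K A (n + 1) b := rfl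
      rw [hw, hΔT]
      exact keyF K A Sp hSp ΔN hΔN (n + 1) b
    · simp only [map_zero]
    · intro w w' _ _ ih ih'
      have h0 : TensorAlgebra.ι K (w + w') = TensorAlgebra.ι K w + TensorAlgebra.ι K w' :=
        map_add _ _ _
      rw [h0, map_add Sp, map_add ΔN, map_add ΔT,
        map_add (Algebra.TensorProduct.map Sp Sp), ih, ih']
    · intro r w _ ih
      have h0 : TensorAlgebra.ι K (r • w) = r • TensorAlgebra.ι K w := map_smul _ r w
      rw [h0, map_smul Sp, map_smul ΔN, map_smul ΔT,
        map_smul (Algebra.TensorProduct.map Sp Sp), ih]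
  have h3 : ∀ x : TT K A, ΔN (Sp x) = (Algebra.TensorProduct.map Sp Sp) (ΔT x) := by
    have hcomp : ΔN.comp Sp = (Algebra.TensorProduct.map Sp Sp).comp ΔT := by
      apply TensorAlgebra.hom_ext
      apply LinearMap.ext
      intro v
      exact hgen v
    intro x
    exact DFunLike.congr_fun hcomp x
  refine ⟨fun x y => map_mul Sp x y, map_one Sp, h3, ?_, ?_⟩
  · exact half_intertwine K A Sp hSp ΔN ΔT h3 ΔpN ΔpT
      (fun P b => dcopP K A P b) (fun m b => wcopP K A m b)
      (fun n b => keyP K A Sp hSp (n + 1) b)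
      (fun n P b h => hpNgen (n + 1) P b h)   -- check arity below
      (fun n b => hpTgen n b)
      hpNext hpText
  · exact half_intertwine K A Sp hSp ΔN ΔT h3 ΔsN ΔsT
      (fun P b => dcopS K A P b) (fun m b => wcopS K A m b)
      (fun n b => keyS K A Sp hSp (n + 1) (Nat.succ_pos n) b)
      (fun n P b h => hsNgen (n + 1) P b h)
      (fun n b => hsTgen n b)
      hsNext hsText
end
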